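/- arXiv:0809.0788 — 10 statements merged into one kernel-verified Lean document; each statement's English description precedes it below -/
import Mathlib

section
/- Let B be a σ-structure with finitely many pp-definable binary relations. Then for every element b ∈ B, the expansion [B, {b}] of B by the unary relation {b} has finitely many pp-definable unary relations. -/
/-- A relational signature: a set of relation symbols, each with an arity. -/
structure RelSig where
  symbols : Type
  arity : symbols → ℕ

/-- A relational structure over a signature `σ`. -/
structure RelStruct (σ : RelSig) where
  carrier : Type
  rel : (R : σ.symbols) → Set (Fin (σ.arity R) → carrier)

/-- `h` is a homomorphism from `A` to `B`. -/
def IsHom {σ : RelSig} (A B : RelStruct σ) (h : A.carrier → B.carrier) : Prop :=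
  ∀ (R : σ.symbols) (t : Fin (σ.arity R) → A.carrier),
    t ∈ A.rel R → (fun i => h (t i)) ∈ B.rel R

/-- `A → B`: there exists a homomorphism from `A` to `B`. -/
def HomTo {σ : RelSig} (A B : RelStruct σ) : Prop := ∃ h, IsHom A B h

/-- The power structure `℘(B)`: universe the nonempty subsets of `B`, with
`R^{℘(B)} = {(π₁ S, …, π_k S) : S ⊆ R^B, S ≠ ∅}`. -/
def PowStruct {σ : RelSig} (B : RelStruct σ) : RelStruct σ where
  carrier := {S : Set B.carrier // S.Nonempty}
  rel R := {t | ∃ S : Set (Fin (σ.arity R) → B.carrier), S.Nonempty ∧ S ⊆ B.rel R ∧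
    ∀ i, (t i).val = (fun s => s i) '' S}

/-- The instance `(A, B)` has the peek arc consistency condition: for every `a ∈ A`
there is a homomorphism `h : A → ℘(B)` with `h a` a singleton. -/
def PACC {σ : RelSig} (A B : RelStruct σ) : Prop :=
  ∀ a : A.carrier, ∃ h : A.carrier → (PowStruct B).carrier,
    IsHom A (PowStruct B) h ∧ ∃ b, (h a).val = {b}

/-- Peek arc consistency decides `CSP(B)`: every finite instance with the PACC
homomorphically maps to `B`. -/
def PACdecides {σ : RelSig} (B : RelStruct σ) : Prop :=
  ∀ A : RelStruct σ, Finite A.carrier → PACC A B → HomTo A B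

/-- The induced substructure of `℘(B)^n` on the tuples having at least one
singleton coordinate. -/
def IndPow {σ : RelSig} (B : RelStruct σ) (n : ℕ) : RelStruct σ where
  carrier := {v : Fin n → (PowStruct B).carrier // ∃ j : Fin n, ∃ b, (v j).val = {b}}
  rel R := {t | ∀ j : Fin n, (fun i => (t i).val j) ∈ (PowStruct B).rel R}

/-- The induced substructure of `B` with universe `C`. -/
def InducedOn {σ : RelSig} (B : RelStruct σ) (C : Set B.carrier) : RelStruct σ where
  carrier := C
  rel R := {t | (fun i => ((t i) : B.carrier)) ∈ B.rel R}

/-- Primitive positive formulas over `σ` with free variables from `V`. -/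
inductive PP (σ : RelSig) : Type → Type 1 where
  | atom {V : Type} (R : σ.symbols) (v : Fin (σ.arity R) → V) : PP σ V
  | conj {V : Type} : PP σ V → PP σ V → PP σ V
  | ex {V : Type} : PP σ (Option V) → PP σ V

/-- Satisfaction of a pp-formula in a structure under an assignment. -/
def PP.Sat {σ : RelSig} (B : RelStruct σ) : {V : Type} → PP σ V → (V → B.carrier) → Prop
  | _, .atom R v, α => (fun i => α (v i)) ∈ B.rel R
  | _, .conj φ ψ, α => PP.Sat B φ α ∧ PP.Sat B ψ α
  | _, .ex φ, α => ∃ b, PP.Sat B φ (fun x => Option.elim x b α)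

/-- A `k`-ary relation is pp-definable in `B`. -/
def PPDefinable {σ : RelSig} (B : RelStruct σ) {k : ℕ} (R : Set (Fin k → B.carrier)) : Prop :=
  ∃ φ : PP σ (Fin k), R = {t | PP.Sat B φ t}

/-- Expand a signature by one new symbol of arity `k`. -/
def RelSig.addSym (σ : RelSig) (k : ℕ) : RelSig :=
  ⟨σ.symbols ⊕ Unit, Sum.elim σ.arity fun _ => k⟩

/-- Expand a structure by one new relation of arity `k`. -/
def RelStruct.expandOne {σ : RelSig} (B : RelStruct σ) (k : ℕ)
    (T : Set (Fin k → B.carrier)) : RelStruct (σ.addSym k) where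
  carrier := B.carrier
  rel R := match R with
    | .inl r => B.rel r
    | .inr _ => T

/-- Disjoint union of two signatures. -/
def RelSig.sum (σ τ : RelSig) : RelSig :=
  ⟨σ.symbols ⊕ τ.symbols, Sum.elim σ.arity τ.arity⟩

/-- Expand a structure by a family of new relations indexed by a second signature. -/
def RelStruct.expandMany {σ τ : RelSig} (B : RelStruct σ)
    (extra : (S : τ.symbols) → Set (Fin (τ.arity S) → B.carrier)) :
    RelStruct (σ.sum τ) where
  carrier := B.carrier
  rel R := match R with
    | .inl r => B.rel r
    | .inr s => extra s

/-- A ternary operation `f` is a polymorphism of `B`. -/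
def IsPolymorphism3 {σ : RelSig} (B : RelStruct σ)
    (f : B.carrier → B.carrier → B.carrier → B.carrier) : Prop :=
  ∀ (R : σ.symbols) (t₁ t₂ t₃ : Fin (σ.arity R) → B.carrier),
    t₁ ∈ B.rel R → t₂ ∈ B.rel R → t₃ ∈ B.rel R →
      (fun i => f (t₁ i) (t₂ i) (t₃ i)) ∈ B.rel R

/-- A ternary operation is a slice-semilattice operation: every slice `⊕_b = f (·, ·, b)`
is associative, commutative, and idempotent. -/
def IsSliceSemilattice {B : Type} (f : B → B → B → B) : Prop :=
  ∀ b : B,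
    (∀ x y z, f (f x y b) z b = f x (f y z b) b) ∧
    (∀ x y, f x y b = f y x b) ∧
    (∀ x, f x x b = x)

/-- The signature with three binary relation symbols (for 2-SAT). -/
@[reducible] def sig3 : RelSig := ⟨Fin 3, fun _ => 2⟩

/-- The 2-SAT structure: universe `{0,1}` with the three relations
`{0,1}² \ {(0,0)}`, `{0,1}² \ {(0,1)}`, `{0,1}² \ {(1,1)}`. -/
@[reducible] def twoSat : RelStruct sig3 where
  carrier := Fin 2
  rel R := match R with
    | ⟨0, _⟩ => {t | ¬(t 0 = 0 ∧ t 1 = 0)}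
    | ⟨1, _⟩ => {t | ¬(t 0 = 0 ∧ t 1 = 1)}
    | ⟨2, _⟩ => {t | ¬(t 0 = 1 ∧ t 1 = 1)}

/-- The signature with a single binary relation symbol. -/
@[reducible] def graphSig : RelSig := ⟨Unit, fun _ => 2⟩

/-- Cyclic successor on `Fin n`. -/
def cycSucc {n : ℕ} (hn : 0 < n) (i : Fin n) : Fin n :=
  ⟨(i.val + 1) % n, Nat.mod_lt _ hn⟩

/-- The signature with two binary relation symbols (for `(ℚ; ≤, ≠)`). -/
@[reducible] def sig2 : RelSig := ⟨Fin 2, fun _ => 2⟩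

/-- The structure `(ℚ; ≤, ≠)`. -/
@[reducible] def ratStruct : RelStruct sig2 where
  carrier := ℚ
  rel R := match R with
    | ⟨0, _⟩ => {t | t 0 ≤ t 1}
    | ⟨1, _⟩ => {t | t 0 ≠ t 1}

/-! ### Auxiliary machinery for Statement 4 -/

/-- Rename the variables of a pp-formula. -/
def ppRename {σ : RelSig} : {V W : Type} → (V → W) → PP σ V → PP σ W
  | _, _, f, .atom R v => .atom R (fun i => f (v i))
  | _, _, f, .conj φ ψ => .conj (ppRename f φ) (ppRename f ψ)
  | _, _, f, .ex φ => .ex (ppRename (Option.map f) φ)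

theorem sat_ppRename {σ : RelSig} (B : RelStruct σ) :
    ∀ {V W : Type} (f : V → W) (φ : PP σ V) (α : W → B.carrier),
      PP.Sat B (ppRename f φ) α ↔ PP.Sat B φ (fun v => α (f v))
  | _, _, f, .atom R v, α => Iff.rfl
  | _, _, f, .conj φ ψ, α =>
      and_congr (sat_ppRename B f φ α) (sat_ppRename B f ψ α)
  | _, _, f, .ex φ, α => by
      simp only [ppRename, PP.Sat]
      refine exists_congr fun c => ?_
      rw [sat_ppRename B (Option.map f) φ]
      have h : (fun v => (fun x => Option.elim x c α) (Option.map f v)) =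
          (fun x => Option.elim x c fun v => α (f v)) := by
        funext x; cases x <;> rfl
      rw [h]

/-- A list of atoms over variable type `V`. -/
abbrev Atoms (σ : RelSig) (V : Type) := List ((R : σ.symbols) × (Fin (σ.arity R) → V))

/-- Satisfaction of a single atom. -/
def atomSat {σ : RelSig} (B : RelStruct σ) {V : Type} (α : V → B.carrier)
    (a : (R : σ.symbols) × (Fin (σ.arity R) → V)) : Prop :=
  (fun i => α (a.2 i)) ∈ B.rel a.1

/-- Prenex normal form: every pp-formula is equivalent to a block of existentials
followed by a conjunction of atoms. -/
theorem ppToNF {σ : RelSig} :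
    ∀ {V : Type} (φ : PP σ V), ∃ (n : ℕ) (L : Atoms σ (V ⊕ Fin n)),
      ∀ (B : RelStruct σ) (α : V → B.carrier),
        PP.Sat B φ α ↔ ∃ w : Fin n → B.carrier, ∀ a ∈ L, atomSat B (Sum.elim α w) a
  | _, .atom R v => by
      refine ⟨0, [⟨R, fun i => Sum.inl (v i)⟩], fun B α => ?_⟩
      constructor
      · intro h
        exact ⟨Fin.elim0, by
          intro a ha
          simp only [List.mem_singleton] at ha
          subst ha
          exact h⟩
      · rintro ⟨w, hw⟩
        exact hw _ (List.mem_singleton_self _)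
  | _, .conj φ ψ => by
      obtain ⟨m, L₁, h₁⟩ := ppToNF φ
      obtain ⟨n, L₂, h₂⟩ := ppToNF ψ
      refine ⟨m + n,
        L₁.map (fun a => ⟨a.1, fun i => Sum.map id (Fin.castAdd n) (a.2 i)⟩) ++
        L₂.map (fun a => ⟨a.1, fun i => Sum.map id (Fin.natAdd m) (a.2 i)⟩),
        fun B α => ?_⟩
      rw [show PP.Sat B (PP.conj φ ψ) α = (PP.Sat B φ α ∧ PP.Sat B ψ α) from rfl,
        h₁ B α, h₂ B α]
      constructor
      · rintro ⟨⟨w₁, hw₁⟩, ⟨w₂, hw₂⟩⟩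
        refine ⟨Fin.append w₁ w₂, ?_⟩
        intro a ha
        rcases List.mem_append.1 ha with ha | ha <;>
          obtain ⟨a', ha', rfl⟩ := List.mem_map.1 ha
        · have := hw₁ a' ha'
          unfold atomSat at this ⊢
          convert this using 2
          rename_i i
          cases h : a'.2 i with
          | inl v => simp [h]
          | inr j => simp [h, Fin.append_left]
        · have := hw₂ a' ha'
          unfold atomSat at this ⊢
          convert this using 2
          rename_i i
          cases h : a'.2 i with
          | inl v => simp [h]
          | inr j => simp [h, Fin.append_right]
      · rintro ⟨w, hw⟩
        constructor
        · refine ⟨fun j => w (Fin.castAdd n j), ?_⟩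
          intro a ha
          have := hw _ (List.mem_append_left _ (List.mem_map_of_mem ha))
          unfold atomSat at this ⊢
          convert this using 2
          rename_i i
          cases h : a.2 i with
          | inl v => simp [h]
          | inr j => simp [h]
        · refine ⟨fun j => w (Fin.natAdd m j), ?_⟩
          intro a ha
          have := hw _ (List.mem_append_right _ (List.mem_map_of_mem ha))
          unfold atomSat at this ⊢
          convert this using 2
          rename_i i
          cases h : a.2 i with
          | inl v => simp [h]
          | inr j => simp [h]
  | _, .ex φ => by
      obtain ⟨n, L, hL⟩ := ppToNF φ
      refine ⟨n + 1,
        L.map (fun a => ⟨a.1, fun i =>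
          Sum.elim (fun x => Option.elim x (Sum.inr (Fin.last n)) Sum.inl)
            (fun j => Sum.inr j.castSucc) (a.2 i)⟩),
        fun B α => ?_⟩
      rw [show PP.Sat B (PP.ex φ) α =
        (∃ c, PP.Sat B φ (fun x => Option.elim x c α)) from rfl]
      constructor
      · rintro ⟨c, hc⟩
        obtain ⟨w, hw⟩ := (hL B _).1 hc
        refine ⟨Fin.snoc w c, ?_⟩
        intro a ha
        obtain ⟨a', ha', rfl⟩ := List.mem_map.1 ha
        have := hw a' ha'
        unfold atomSat at this ⊢
        convert this using 2
        rename_i i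
        cases h : a'.2 i with
        | inl v =>
          cases v with
          | none => simp [h, Fin.snoc_last]
          | some v => simp [h]
        | inr j => simp [h, Fin.snoc_castSucc]
      · rintro ⟨w, hw⟩
        refine ⟨w (Fin.last n), (hL B _).2 ⟨fun j => w j.castSucc, ?_⟩⟩
        intro a ha
        have := hw _ (List.mem_map_of_mem ha)
        unfold atomSat at this ⊢
        convert this using 2
        rename_i i
        cases h : a.2 i with
        | inl v =>
          cases v with
          | none => simp [h]
          | some v => simp [h]
        | inr j => simp [h]

/-- Existentially quantify a block of `n` variables. -/
def exN {σ : RelSig} {W : Type} : (n : ℕ) → PP σ (W ⊕ Fin n) → PP σ W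
  | 0, φ => ppRename (Sum.elim id Fin.elim0) φ
  | n + 1, φ => exN n (.ex (ppRename
      (Sum.elim (fun w => some (Sum.inl w))
        (Fin.lastCases none (fun j => some (Sum.inr j)))) φ))

theorem sat_exN {σ : RelSig} (B : RelStruct σ) {W : Type} :
    ∀ (n : ℕ) (φ : PP σ (W ⊕ Fin n)) (α : W → B.carrier),
      PP.Sat B (exN n φ) α ↔ ∃ w : Fin n → B.carrier, PP.Sat B φ (Sum.elim α w)
  | 0, φ, α => by
      rw [show exN 0 φ = ppRename (Sum.elim id Fin.elim0) φ from rfl,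
        sat_ppRename]
      constructor
      · intro h
        refine ⟨Fin.elim0, ?_⟩
        convert h using 1
        funext v
        cases v with
        | inl v => rfl
        | inr j => exact j.elim0
      · rintro ⟨w, hw⟩
        convert hw using 1
        funext v
        cases v with
        | inl v => rfl
        | inr j => exact j.elim0
  | n + 1, φ, α => by
      rw [show exN (n+1) φ = exN n (.ex (ppRename
        (Sum.elim (fun w => some (Sum.inl w))
          (Fin.lastCases none (fun j => some (Sum.inr j)))) φ)) from rfl,
        sat_exN B n]
      constructor
      · rintro ⟨w, hw⟩
        obtain ⟨c, hc⟩ := hw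
        rw [sat_ppRename] at hc
        refine ⟨Fin.snoc w c, ?_⟩
        convert hc using 1
        funext v
        cases v with
        | inl v => rfl
        | inr j =>
          refine Fin.lastCases ?_ (fun j' => ?_) j
          · simp [Fin.snoc_last]
          · simp [Fin.snoc_castSucc]
      · rintro ⟨w', hw'⟩
        refine ⟨fun j => w' j.castSucc, ?_⟩
        refine ⟨w' (Fin.last n), ?_⟩
        rw [sat_ppRename]
        convert hw' using 1
        funext v
        cases v with
        | inl v => rfl
        | inr j =>
          refine Fin.lastCases ?_ (fun j' => ?_) j
          · simp
          · simp

/-- Conjunction of a nonempty list of atoms. -/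
def bigConj {σ : RelSig} {V : Type}
    (a₀ : (R : σ.symbols) × (Fin (σ.arity R) → V)) (L : Atoms σ V) : PP σ V :=
  L.foldl (fun ψ a => .conj ψ (.atom a.1 a.2)) (.atom a₀.1 a₀.2)

theorem sat_foldl_conj {σ : RelSig} (B : RelStruct σ) {V : Type} :
    ∀ (L : Atoms σ V) (ψ : PP σ V) (α : V → B.carrier),
      PP.Sat B (L.foldl (fun ψ a => .conj ψ (.atom a.1 a.2)) ψ) α ↔
        (PP.Sat B ψ α ∧ ∀ a ∈ L, atomSat B α a)
  | [], ψ, α => by simp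
  | a :: L, ψ, α => by
      rw [List.foldl_cons, sat_foldl_conj B L]
      rw [show PP.Sat B (PP.conj ψ (.atom a.1 a.2)) α =
        (PP.Sat B ψ α ∧ atomSat B α a) from rfl]
      simp only [List.mem_cons]
      constructor
      · rintro ⟨⟨h1, h2⟩, h3⟩
        exact ⟨h1, fun a' ha' => ha'.elim (fun h => h ▸ h2) (h3 a')⟩
      · rintro ⟨h1, h2⟩
        exact ⟨⟨h1, h2 a (Or.inl rfl)⟩, fun a' ha' => h2 a' (Or.inr ha')⟩

theorem sat_bigConj {σ : RelSig} (B : RelStruct σ) {V : Type}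
    (a₀ : (R : σ.symbols) × (Fin (σ.arity R) → V)) (L : Atoms σ V)
    (α : V → B.carrier) :
    PP.Sat B (bigConj a₀ L) α ↔ ∀ a ∈ a₀ :: L, atomSat B α a := by
  rw [bigConj, sat_foldl_conj B L, List.forall_mem_cons]
  exact Iff.rfl

/-- Eliminate the unary symbol `U` from an atom, remapping variables via `ρ`. -/
def uElim {σ : RelSig} {n : ℕ} (ρ : Fin 1 ⊕ Fin n → Fin 2 ⊕ Fin n) :
    ((R : (σ.addSym 1).symbols) × (Fin ((σ.addSym 1).arity R) → Fin 1 ⊕ Fin n)) →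
      Option ((R : σ.symbols) × (Fin (σ.arity R) → Fin 2 ⊕ Fin n))
  | ⟨Sum.inl R', f⟩ => some ⟨R', fun i => ρ (f i)⟩
  | ⟨Sum.inr _, _⟩ => none

/-- If `B` has finitely many pp-definable binary relations, then for every
`b ∈ B` the expansion `[B, {b}]` of `B` by the unary relation `{b}` has finitely many
pp-definable unary relations. -/
theorem expansion_finitely_many_pp_unary {σ : RelSig} [Finite σ.symbols] (B : RelStruct σ)
    (hbin : {R : Set (Fin 2 → B.carrier) | PPDefinable B R}.Finite) (b : B.carrier) :
    {R : Set (Fin 1 → B.carrier) |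
      PPDefinable (B.expandOne 1 {t | t 0 = b}) R}.Finite := by
  classical
  set Bex := B.expandOne 1 {t | t 0 = b} with hBexDef
  set F : Set (Fin 2 → B.carrier) → Set (Fin 1 → B.carrier) :=
    fun S => {t | (fun i : Fin 2 => if i = 0 then t 0 else b) ∈ S} with hFDef
  have hT : (insert (∅ : Set (Fin 1 → B.carrier))
      (insert {t | t 0 = b} (insert Set.univ
        (F '' {S | PPDefinable B S})))).Finite :=
    (((hbin.image F).insert _).insert _).insert _
  refine Set.Finite.subset hT ?_
  rintro R ⟨φ, rfl⟩
  obtain ⟨n, L, hNF⟩ := ppToNF (σ := σ.addSym 1) φ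
  set E : Set (Fin 1 ⊕ Fin n) :=
    {v | (⟨Sum.inr (), fun _ => v⟩ :
      (R : (σ.addSym 1).symbols) × (Fin ((σ.addSym 1).arity R) → Fin 1 ⊕ Fin n)) ∈ L}
    with hEDef
  have hEb : ∀ (β : Fin 1 ⊕ Fin n → B.carrier),
      (∀ a ∈ L, atomSat Bex β a) → ∀ v ∈ E, β v = b := by
    intro β hβ v hv
    exact hβ _ hv
  by_cases hx : (Sum.inl 0 : Fin 1 ⊕ Fin n) ∈ E
  · -- the free variable is forced to equal `b`
    have hsub : {t | PP.Sat Bex φ t} ⊆ {t : Fin 1 → B.carrier | t 0 = b} := by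
      intro t ht
      obtain ⟨w, hw⟩ := (hNF Bex t).1 ht
      exact hEb (Sum.elim t w) hw _ hx
    have hsing : {t : Fin 1 → B.carrier | t 0 = b} = {fun _ => b} := by
      ext t
      simp only [Set.mem_setOf_eq, Set.mem_singleton_iff]
      constructor
      · intro h
        funext i
        have hi : i = 0 := Subsingleton.elim i 0
        rw [hi, h]
      · intro h
        rw [h]
    replace hsub := hsub.trans hsing.le
    rcases Set.subset_singleton_iff_eq.1 hsub with h | h
    · rw [h]; exact Set.mem_insert _ _
    · rw [h]
      exact hsing ▸ Set.mem_insert_of_mem _ (Set.mem_insert _ _)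
  · -- eliminate U-atoms by sending their variables to a fresh free variable
    set ρ : Fin 1 ⊕ Fin n → Fin 2 ⊕ Fin n :=
      Sum.elim (fun _ => Sum.inl 0)
        (fun j => if (Sum.inr j : Fin 1 ⊕ Fin n) ∈ E then Sum.inl 1 else Sum.inr j)
      with hρDef
    have hcore : ∀ t : Fin 1 → B.carrier,
        (∃ w : Fin n → B.carrier, ∀ a ∈ L, atomSat Bex (Sum.elim t w) a) ↔
        (∃ w' : Fin n → B.carrier, ∀ a' ∈ L.filterMap (uElim ρ),
          atomSat B (Sum.elim (fun i : Fin 2 => if i = 0 then t 0 else b) w') a') := by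
      intro t
      constructor
      · rintro ⟨w, hw⟩
        refine ⟨w, ?_⟩
        intro a' ha'
        rw [List.mem_filterMap] at ha'
        obtain ⟨a, haL, hga⟩ := ha'
        obtain ⟨R', f⟩ := a
        cases R' with
        | inl R' =>
          rw [show uElim (σ := σ) ρ ⟨Sum.inl R', f⟩ = some ⟨R', fun i => ρ (f i)⟩
            from rfl] at hga
          injection hga with hga
          subst hga
          have hsat : (fun i => Sum.elim t w (f i)) ∈ B.rel R' := hw ⟨Sum.inl R', f⟩ haL
          show (fun i => Sum.elim (fun i : Fin 2 => if i = 0 then t 0 else b) w (ρ (f i)))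
            ∈ B.rel R'
          convert hsat using 2
          rename_i i
          cases hv : f i with
          | inl k =>
            have hk : k = (0 : Fin 1) := Subsingleton.elim _ _
            subst hk
            simp [hρDef]
          | inr j =>
            by_cases hj : (Sum.inr j : Fin 1 ⊕ Fin n) ∈ E
            · have hb' : w j = b := hEb (Sum.elim t w) hw _ hj
              simp [hρDef, hj, hb']
            · simp [hρDef, hj]
        | inr u =>
          cases hga
      · rintro ⟨w', hw'⟩
        refine ⟨fun j => if (Sum.inr j : Fin 1 ⊕ Fin n) ∈ E then b else w' j, ?_⟩
        intro a haL
        obtain ⟨R', f⟩ := a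
        cases R' with
        | inl R' =>
          have ha' : (⟨R', fun i => ρ (f i)⟩ : (R : σ.symbols) ×
              (Fin (σ.arity R) → Fin 2 ⊕ Fin n)) ∈ L.filterMap (uElim ρ) :=
            List.mem_filterMap.2 ⟨⟨Sum.inl R', f⟩, haL, rfl⟩
          have hsat : (fun i => Sum.elim (fun i : Fin 2 => if i = 0 then t 0 else b) w'
              (ρ (f i))) ∈ B.rel R' := hw' _ ha'
          show (fun i => Sum.elim t
            (fun j => if (Sum.inr j : Fin 1 ⊕ Fin n) ∈ E then b else w' j) (f i)) ∈ B.rel R'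
          convert hsat using 2
          rename_i i
          cases hv : f i with
          | inl k =>
            have hk : k = (0 : Fin 1) := Subsingleton.elim _ _
            subst hk
            simp [hρDef]
          | inr j =>
            by_cases hj : (Sum.inr j : Fin 1 ⊕ Fin n) ∈ E
            · simp [hρDef, hj]
            · simp [hρDef, hj]
        | inr u =>
          cases u
          have hfeq : (fun _ => f (0 : Fin 1)) = f :=
            funext fun i => congrArg f (Subsingleton.elim (α := Fin 1) 0 i)
          have hmk : (⟨Sum.inr (), fun _ => f (0 : Fin 1)⟩ :
              (R : (σ.addSym 1).symbols) ×
                (Fin ((σ.addSym 1).arity R) → Fin 1 ⊕ Fin n)) = ⟨Sum.inr (), f⟩ :=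
            congrArg (Sigma.mk (Sum.inr () : (σ.addSym 1).symbols)) hfeq
          have hfE : f (0 : Fin 1) ∈ E := by
            rw [hEDef]
            simp only [Set.mem_setOf_eq]
            rw [hmk]
            exact haL
          show Sum.elim t (fun j => if (Sum.inr j : Fin 1 ⊕ Fin n) ∈ E then b else w' j)
            (f (0 : Fin 1)) = b
          cases hv : f (0 : Fin 1) with
          | inl k =>
            exfalso
            apply hx
            have hk : k = (0 : Fin 1) := Subsingleton.elim _ _
            rw [hv, hk] at hfE
            exact hfE
          | inr j =>
            rw [hv] at hfE
            simp only [Sum.elim_inr]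
            rw [if_pos hfE]
    rcases hL2 : L.filterMap (uElim ρ) with _ | ⟨a₀, rest⟩
    · rw [hL2] at hcore
      have huniv : {t | PP.Sat Bex φ t} = Set.univ := by
        ext t
        simp only [Set.mem_setOf_eq, Set.mem_univ, iff_true]
        refine (hNF Bex t).2 ((hcore t).2 ⟨fun _ => b, ?_⟩)
        intro a' ha'
        exact absurd ha' List.not_mem_nil
      rw [huniv]
      exact Set.mem_insert_of_mem _ (Set.mem_insert_of_mem _ (Set.mem_insert _ _))
    · rw [hL2] at hcore
      refine Set.mem_insert_of_mem _ (Set.mem_insert_of_mem _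
        (Set.mem_insert_of_mem _ ?_))
      refine ⟨{s | PP.Sat B (exN n (bigConj a₀ rest)) s},
        ⟨exN n (bigConj a₀ rest), rfl⟩, ?_⟩
      ext t
      simp only [hFDef, Set.mem_setOf_eq]
      rw [sat_exN]
      constructor
      · rintro ⟨w', hw'⟩
        refine (hNF Bex t).2 ((hcore t).2 ⟨w', ?_⟩)
        intro a' ha'
        exact ((sat_bigConj B a₀ rest _).1 hw') a' ha'
      · intro ht
        obtain ⟨w', hw'⟩ := (hcore t).1 ((hNF Bex t).1 ht)
        exact ⟨w', (sat_bigConj B a₀ rest _).2 hw'⟩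
end

section
/- Let B be a σ-structure such that PAC decides CSP(B). Let R, S ∈ σ both have arity k, and let B' be the expansion of B by one new k-ary relation symbol T interpreted as T^{B'} = R^B ∩ S^B. Then PAC decides CSP(B'). -/
/-- If PAC decides `CSP(B)`, then PAC decides the CSP of the expansion of `B`
by one new symbol `T` interpreted as the intersection `R^B ∩ S^B` of two relations of the
same arity. -/
theorem PAC_expand_intersection {σ : RelSig} [Finite σ.symbols] (B : RelStruct σ)
    (hB : PACdecides B) (R S : σ.symbols) (hRS : σ.arity S = σ.arity R) :
    PACdecides (B.expandOne (σ.arity R)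
      {t | t ∈ B.rel R ∧ (fun i => t (Fin.cast hRS i)) ∈ B.rel S}) := by
  classical
  intro A' hfin hpacc
  set T : Set (Fin (σ.arity R) → B.carrier) :=
    {t | t ∈ B.rel R ∧ (fun i => t (Fin.cast hRS i)) ∈ B.rel S} with hTdef
  -- The translated instance over σ
  let A : RelStruct σ :=
    { carrier := A'.carrier
      rel := fun r => {u | u ∈ A'.rel (Sum.inl r) ∨
        (∃ (e : R = r), ∃ t, t ∈ A'.rel (Sum.inr ()) ∧
          u = fun i => t (Fin.cast (congrArg σ.arity e.symm) i)) ∨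
        (∃ (e : S = r), ∃ t, t ∈ A'.rel (Sum.inr ()) ∧
          u = fun i => t (Fin.cast hRS (Fin.cast (congrArg σ.arity e.symm) i)))} }
  -- casts along refl-like proofs are identity
  have castid : ∀ (p : σ.arity R = σ.arity R) (i : Fin (σ.arity R)), Fin.cast p i = i := by
    intro p i; exact Fin.ext rfl
  have castidS : ∀ (p : σ.arity S = σ.arity S) (i : Fin (σ.arity S)), Fin.cast p i = i := by
    intro p i; exact Fin.ext rfl
  -- Any hom A → B is a hom A' → B'
  have key : ∀ h : A'.carrier → B.carrier, IsHom A B h →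
      IsHom A' (B.expandOne (σ.arity R) T) h := by
    intro h hh Rsym t ht
    match Rsym with
    | Sum.inl r => exact hh r t (Or.inl ht)
    | Sum.inr () =>
      constructor
      · have := hh R (fun i => t (Fin.cast (congrArg σ.arity (rfl : R = R).symm) i))
          (Or.inr (Or.inl ⟨rfl, t, ht, rfl⟩))
        exact this
      · have := hh S (fun i => t (Fin.cast hRS (Fin.cast (congrArg σ.arity (rfl : S = S).symm) i)))
          (Or.inr (Or.inr ⟨rfl, t, ht, rfl⟩))
        exact this
  -- PACC transfers from (A', B') to (A, B)
  have hpacc2 : PACC A B := by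
    intro a
    obtain ⟨h, hh, b, hb⟩ := hpacc a
    refine ⟨h, ?_, b, hb⟩
    intro r u hu
    rcases hu with hu | ⟨e, t, ht, hu⟩ | ⟨e, t, ht, hu⟩
    · exact hh (Sum.inl r) u hu
    · subst e
      obtain ⟨S', hne, hsub, hproj⟩ := hh (Sum.inr ()) t ht
      refine ⟨S', hne, fun s hs => (hsub hs).1, ?_⟩
      intro i
      have h2 : u i = t i := by rw [hu]; rfl
      simp only [h2]; exact hproj i
    · subst e
      obtain ⟨S', hne, hsub, hproj⟩ := hh (Sum.inr ()) t ht
      refine ⟨(fun s => fun i => s (Fin.cast hRS i)) '' S', hne.image _, ?_, ?_⟩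
      · rintro _ ⟨s, hs, rfl⟩
        exact (hsub hs).2
      · intro i
        have hu' : u i = t (Fin.cast hRS i) := by rw [hu]; simp [castidS]
        simp only [Set.image_image]
        simp only [hu']; exact (hproj (Fin.cast hRS i)).trans (Set.image_image (fun s : Fin (σ.arity S) → B.carrier => s i) (fun s : Fin (σ.arity R) → B.carrier => fun i => s (Fin.cast hRS i)) S').symm
  obtain ⟨g, hg⟩ := hB A hfin hpacc2
  exact ⟨g, key g hg⟩
end

section
/- Let B be a σ-structure such that PAC decides CSP(B). Let R ∈ σ have arity k, and let B' be the expansion of B by one new (k+1)-ary relation symbol T interpreted as T^{B'} = R^B × B. Then PAC decides CSP(B'). -/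
/-- If PAC decides `CSP(B)`, then PAC decides the CSP of the expansion of `B`
by one new `(k+1)`-ary symbol `T` interpreted as `R^B × B`, where `R` has arity `k`. -/
theorem PAC_expand_product_with_univ {σ : RelSig} [Finite σ.symbols] (B : RelStruct σ)
    (hB : PACdecides B) (R : σ.symbols) :
    PACdecides (B.expandOne (σ.arity R + 1)
      {t | (fun i : Fin (σ.arity R) => t i.castSucc) ∈ B.rel R}) := by
  set k := σ.arity R with hk
  set T : Set (Fin (k + 1) → B.carrier) :=
    {t | (fun i : Fin k => t i.castSucc) ∈ B.rel R} with hT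
  intro A' hFin hPACC
  -- The σ-reduct of A', with T-constraints translated into R-constraints.
  let A : RelStruct σ :=
    { carrier := A'.carrier
      rel := fun r => A'.rel (Sum.inl r) ∪
        {u | ∃ e : r = R, ∃ t, t ∈ A'.rel (Sum.inr ()) ∧
          ∀ i : Fin k, u (Fin.cast (congrArg σ.arity e).symm i) = t i.castSucc} }
  -- Step 1: PACC for (A, B).
  have hAB : PACC A B := by
    intro a
    obtain ⟨h, hhom, b, hb⟩ := hPACC a
    refine ⟨h, ?_, b, hb⟩
    intro r u hu
    rcases hu with hu | ⟨e, t, ht, htu⟩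
    · exact hhom (Sum.inl r) u hu
    · subst e
      obtain ⟨S, hSne, hST, hproj⟩ := hhom (Sum.inr ()) t ht
      refine ⟨(fun s (i : Fin k) => s i.castSucc) '' S, hSne.image _, ?_, ?_⟩
      · rintro _ ⟨s, hs, rfl⟩
        exact hST hs
      · intro i
        have hui : u i = t i.castSucc := htu i
        show (h (u i)).val = _
        rw [hui, hproj i.castSucc]
        ext x
        constructor
        · rintro ⟨s, hs, rfl⟩
          exact ⟨_, ⟨s, hs, rfl⟩, rfl⟩
        · rintro ⟨_, ⟨s, hs, rfl⟩, rfl⟩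
          exact ⟨s, hs, rfl⟩
  -- Step 2: get a homomorphism A → B.
  obtain ⟨g, hg⟩ := hB A hFin hAB
  -- Step 3: g is also a homomorphism A' → B'.
  refine ⟨g, ?_⟩
  intro r t ht
  match r with
  | Sum.inl r =>
      exact hg r t (Or.inl ht)
  | Sum.inr () =>
      have : (fun i : Fin k => t i.castSucc) ∈ A.rel R :=
        Or.inr ⟨rfl, t, ht, fun i => rfl⟩
      exact hg R _ this
end

section
/- Let B be a σ-structure such that PAC decides CSP(B), and let B' be the expansion of B by one new binary relation symbol T interpreted as the equality relation T^{B'} = {(b, b) : b ∈ B}. Then PAC decides CSP(B'). -/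
/-- If PAC decides `CSP(B)`, then PAC decides the CSP of the expansion of `B`
by one new binary symbol `T` interpreted as the equality relation `{(b, b) : b ∈ B}`. -/
theorem PAC_expand_equality {σ : RelSig} [Finite σ.symbols] (B : RelStruct σ)
    (hB : PACdecides B) :
    PACdecides (B.expandOne 2 {t | t 0 = t 1}) := by
  set B' := B.expandOne 2 {t | t 0 = t 1} with hB'
  intro A' hfin hpacc
  -- relation generated by T-edges
  let r : A'.carrier → A'.carrier → Prop := fun a a' =>
    ∃ t ∈ A'.rel (Sum.inr ()), t (0 : Fin 2) = a ∧ t (1 : Fin 2) = a'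
  -- quotient structure over σ
  let A : RelStruct σ :=
    { carrier := Quot r
      rel := fun R => {t | ∃ t' ∈ A'.rel (Sum.inl R), ∀ i, Quot.mk r (t' i) = t i} }
  have finA : Finite A.carrier := Finite.of_surjective (Quot.mk r) Quot.exists_rep
  -- key: any hom into ℘(B') identifies T-related elements
  have key : ∀ (h : A'.carrier → (PowStruct B').carrier),
      IsHom A' (PowStruct B') h → ∀ a a', r a a' → h a = h a' := by
    intro h hh a a' ⟨t, ht, h0, h1⟩
    have := hh (Sum.inr ()) t ht
    obtain ⟨S, hSne, hSsub, hproj⟩ := this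
    apply Subtype.ext
    rw [← h0, ← h1, hproj (0 : Fin 2), hproj (1 : Fin 2)]
    ext b
    constructor
    · rintro ⟨s, hs, rfl⟩
      exact ⟨s, hs, (hSsub hs).symm⟩
    · rintro ⟨s, hs, rfl⟩
      exact ⟨s, hs, hSsub hs⟩
  -- PACC for the quotient
  have paccA : PACC A B := by
    intro x
    obtain ⟨a, rfl⟩ := Quot.exists_rep x
    obtain ⟨h, hh, b, hb⟩ := hpacc a
    refine ⟨Quot.lift h (key h hh), ?_, b, hb⟩
    intro R t ⟨t', ht', hq⟩
    have := hh (Sum.inl R) t' ht'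
    have e : (fun i => Quot.lift h (key h hh) (t i)) = fun i => h (t' i) := by
      funext i; rw [← hq i]
    show (fun i => Quot.lift h (key h hh) (t i)) ∈ (PowStruct B').rel (Sum.inl R)
    rw [e]
    exact this
  obtain ⟨g, hg⟩ := hB A finA paccA
  refine ⟨fun a => g (Quot.mk r a), ?_⟩
  intro R t ht
  cases R with
  | inl R =>
    exact hg R (fun i => Quot.mk r (t i)) ⟨t, ht, fun i => rfl⟩
  | inr u =>
    have : Quot.mk r (t (0 : Fin 2)) = Quot.mk r (t (1 : Fin 2)) := Quot.sound ⟨t, ht, rfl, rfl⟩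
    show g (Quot.mk r (t (0 : Fin 2))) = g (Quot.mk r (t (1 : Fin 2)))
    rw [this]
end

section
/- Let B and B' be σ-structures that are homomorphically equivalent, i.e., B → B' and B' → B. If PAC decides CSP(B), then PAC decides CSP(B'). -/
lemma pow_hom_lift {σ : RelSig} (B B' : RelStruct σ) (g : B'.carrier → B.carrier)
    (hg : IsHom B' B g) :
    IsHom (PowStruct B') (PowStruct B)
      (fun S => ⟨g '' S.val, S.prop.image g⟩) := by
  intro R t ht
  obtain ⟨S, hSne, hSsub, hproj⟩ := ht
  refine ⟨(fun s => fun i => g (s i)) '' S, hSne.image _, ?_, ?_⟩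
  · rintro _ ⟨s, hs, rfl⟩
    exact hg R s (hSsub hs)
  · intro i
    simp only [hproj i]
    ext x
    constructor
    · rintro ⟨y, ⟨s, hs, rfl⟩, rfl⟩
      exact ⟨_, ⟨s, hs, rfl⟩, rfl⟩
    · rintro ⟨_, ⟨s, hs, rfl⟩, rfl⟩
      exact ⟨s i, ⟨s, hs, rfl⟩, rfl⟩

/-- If `B` and `B'` are homomorphically equivalent and PAC decides `CSP(B)`,
then PAC decides `CSP(B')`. -/
theorem PAC_hom_equivalent {σ : RelSig} [Finite σ.symbols] (B B' : RelStruct σ)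
    (h1 : HomTo B B') (h2 : HomTo B' B) (hB : PACdecides B) :
    PACdecides B' := by
  obtain ⟨f, hf⟩ := h1
  obtain ⟨g, hg⟩ := h2
  intro A hfin hpacc
  have hpaccB : PACC A B := by
    intro a
    obtain ⟨h, hhom, b, hb⟩ := hpacc a
    refine ⟨fun x => ⟨g '' (h x).val, (h x).prop.image g⟩, ?_, g b, ?_⟩
    · intro R t ht
      exact pow_hom_lift B B' g hg R (fun i => h (t i)) (hhom R t ht)
    · simp [hb]
  obtain ⟨k, hk⟩ := hB A hfin hpaccB
  exact ⟨fun x => f (k x), fun R t ht => hf R (fun i => k (t i)) (hk R t ht)⟩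
end

section
/- PAC decides CSP(B) for the 2-SAT structure B, i.e., the structure with universe {0, 1} and binary relations R_{(0,0)}^B = {0,1}² \ {(0,0)}, R_{(0,1)}^B = {0,1}² \ {(0,1)}, and R_{(1,1)}^B = {0,1}² \ {(1,1)}: for every finite structure A over this signature, if (A, B) has the PACC then A → B. -/
/-- The binary relation on `Fin 2` forbidding exactly the pair `(c, d)`. -/
def Rcd (c d : Fin 2) : Set (Fin 2 → Fin 2) := {t | ¬(t 0 = c ∧ t 1 = d)}

lemma rel_eq_Rcd (R : Fin 3) : ∃ c d, twoSat.rel R = Rcd c d := by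
  fin_cases R
  · exact ⟨0, 0, rfl⟩
  · exact ⟨0, 1, rfl⟩
  · exact ⟨1, 1, rfl⟩

lemma fin2_ne {x d : Fin 2} (h : x ≠ d) : x = 1 - d := by
  revert h; revert x d; decide

/-- If the first projection of `S ⊆ Rcd c d` is pinned to the forbidden value `c`, then
the second projection is a singleton. -/
lemma forcing1 {c d : Fin 2} {S : Set (Fin 2 → Fin 2)} (hS : S.Nonempty)
    (hsub : S ⊆ Rcd c d) (h1 : (fun s => s 0) '' S = {c}) :
    ∃ b, (fun s => s 1) '' S = {b} := by
  refine ⟨1 - d, ?_⟩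
  ext x
  simp only [Set.mem_image, Set.mem_singleton_iff]
  constructor
  · rintro ⟨s, hsS, rfl⟩
    have h0 : s 0 = c := by
      have : s 0 ∈ (fun s => s 0) '' S := ⟨s, hsS, rfl⟩
      rw [h1] at this; exact this
    exact fin2_ne (fun hd => hsub hsS ⟨h0, hd⟩)
  · rintro rfl
    obtain ⟨s, hsS⟩ := hS
    have h0 : s 0 = c := by
      have : s 0 ∈ (fun s => s 0) '' S := ⟨s, hsS, rfl⟩
      rw [h1] at this; exact this
    exact ⟨s, hsS, fin2_ne (fun hd => hsub hsS ⟨h0, hd⟩)⟩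

/-- Symmetric version of `forcing1`. -/
lemma forcing2 {c d : Fin 2} {S : Set (Fin 2 → Fin 2)} (hS : S.Nonempty)
    (hsub : S ⊆ Rcd c d) (h1 : (fun s => s 1) '' S = {d}) :
    ∃ b, (fun s => s 0) '' S = {b} := by
  refine ⟨1 - c, ?_⟩
  ext x
  simp only [Set.mem_image, Set.mem_singleton_iff]
  constructor
  · rintro ⟨s, hsS, rfl⟩
    have h0 : s 1 = d := by
      have : s 1 ∈ (fun s => s 1) '' S := ⟨s, hsS, rfl⟩
      rw [h1] at this; exact this
    exact fin2_ne (fun hd => hsub hsS ⟨hd, h0⟩)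
  · rintro rfl
    obtain ⟨s, hsS⟩ := hS
    have h0 : s 1 = d := by
      have : s 1 ∈ (fun s => s 1) '' S := ⟨s, hsS, rfl⟩
      rw [h1] at this; exact this
    exact ⟨s, hsS, fin2_ne (fun hd => hsub hsS ⟨hd, h0⟩)⟩

lemma construct1 {c d e : Fin 2} (hne : e ≠ c) {Q : Set (Fin 2)} (hQ : Q.Nonempty) :
    ∃ S : Set (Fin 2 → Fin 2), S.Nonempty ∧ S ⊆ Rcd c d ∧
      (fun s => s 0) '' S = {e} ∧ (fun s => s 1) '' S = Q := by
  obtain ⟨q, hq⟩ := hQ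
  refine ⟨{s | s 0 = e ∧ s 1 ∈ Q}, ⟨![e, q], by simp [hq]⟩, ?_, ?_, ?_⟩
  · rintro s ⟨hs0, _⟩ ⟨h0, _⟩
    exact hne (by rw [← hs0, h0])
  · ext x
    simp only [Set.mem_image, Set.mem_setOf_eq, Set.mem_singleton_iff]
    constructor
    · rintro ⟨s, ⟨hs0, _⟩, rfl⟩; exact hs0
    · rintro rfl; exact ⟨![x, q], ⟨by simp, by simp [hq]⟩, by simp⟩
  · ext x
    simp only [Set.mem_image, Set.mem_setOf_eq]
    constructor
    · rintro ⟨s, ⟨_, hs1⟩, rfl⟩; exact hs1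
    · intro hx; exact ⟨![e, x], ⟨by simp, by simp [hx]⟩, by simp⟩

lemma construct2 {c d e : Fin 2} (hne : e ≠ d) {P : Set (Fin 2)} (hP : P.Nonempty) :
    ∃ S : Set (Fin 2 → Fin 2), S.Nonempty ∧ S ⊆ Rcd c d ∧
      (fun s => s 0) '' S = P ∧ (fun s => s 1) '' S = {e} := by
  obtain ⟨p, hp⟩ := hP
  refine ⟨{s | s 0 ∈ P ∧ s 1 = e}, ⟨![p, e], by simp [hp]⟩, ?_, ?_, ?_⟩
  · rintro s ⟨_, hs1⟩ ⟨_, h1⟩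
    exact hne (by rw [← hs1, h1])
  · ext x
    simp only [Set.mem_image, Set.mem_setOf_eq]
    constructor
    · rintro ⟨s, ⟨hs0, _⟩, rfl⟩; exact hs0
    · intro hx; exact ⟨![x, e], ⟨by simp [hx], by simp⟩, by simp⟩
  · ext x
    simp only [Set.mem_image, Set.mem_setOf_eq, Set.mem_singleton_iff]
    constructor
    · rintro ⟨s, ⟨_, hs1⟩, rfl⟩; exact hs1
    · rintro rfl; exact ⟨![p, x], ⟨by simp [hp], by simp⟩, by simp⟩

open Classical in
/-- Merge two homomorphisms into `℘(twoSat)`, preferring `h1` wherever it is a singleton. -/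
noncomputable def mergeHom {A : RelStruct sig3}
    (h1 h2 : A.carrier → (PowStruct twoSat).carrier) :
    A.carrier → (PowStruct twoSat).carrier :=
  fun x => if ∃ b, (h1 x).val = {b} then h1 x else h2 x

lemma merge_isHom {A : RelStruct sig3}
    {h1 h2 : A.carrier → (PowStruct twoSat).carrier}
    (H1 : IsHom A (PowStruct twoSat) h1) (H2 : IsHom A (PowStruct twoSat) h2) :
    IsHom A (PowStruct twoSat) (mergeHom h1 h2) := by
  intro R t ht
  obtain ⟨c, d, hR⟩ := rel_eq_Rcd R
  by_cases s0 : ∃ b, (h1 (t 0)).val = {b} <;> by_cases s1 : ∃ b, (h1 (t 1)).val = {b}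
  · -- both singleton: use h1
    have e : (fun i => mergeHom h1 h2 (t i)) = (fun i => h1 (t i)) := by
      funext i
      fin_cases i
      · exact if_pos s0
      · exact if_pos s1
    rw [e]
    exact H1 R t ht
  · -- h1 (t 0) singleton, h1 (t 1) not
    obtain ⟨e, he⟩ := s0
    obtain ⟨S, hSne, hSsub, hproj⟩ := H1 R t ht
    rw [hR] at hSsub
    have hne : e ≠ c := by
      rintro rfl
      exact s1 (by
        obtain ⟨b, hb⟩ := forcing1 hSne hSsub (by rw [← hproj 0, he])
        exact ⟨b, by rw [hproj 1, hb]⟩)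
    obtain ⟨S', hne', hsub', hp0, hp1⟩ := construct1 hne (h2 (t 1)).2
    refine ⟨S', hne', by rw [hR]; exact hsub', ?_⟩
    intro i
    fin_cases i
    · show (mergeHom h1 h2 (t 0)).val = _
      rw [mergeHom, if_pos ⟨e, he⟩, he]
      exact hp0.symm
    · show (mergeHom h1 h2 (t 1)).val = _
      rw [mergeHom, if_neg s1]
      exact hp1.symm
  · -- h1 (t 1) singleton, h1 (t 0) not
    obtain ⟨e, he⟩ := s1
    obtain ⟨S, hSne, hSsub, hproj⟩ := H1 R t ht
    rw [hR] at hSsub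
    have hne : e ≠ d := by
      rintro rfl
      exact s0 (by
        obtain ⟨b, hb⟩ := forcing2 hSne hSsub (by rw [← hproj 1, he])
        exact ⟨b, by rw [hproj 0, hb]⟩)
    obtain ⟨S', hne', hsub', hp0, hp1⟩ := construct2 hne (h2 (t 0)).2
    refine ⟨S', hne', by rw [hR]; exact hsub', ?_⟩
    intro i
    fin_cases i
    · show (mergeHom h1 h2 (t 0)).val = _
      rw [mergeHom, if_neg s0]
      exact hp0.symm
    · show (mergeHom h1 h2 (t 1)).val = _
      rw [mergeHom, if_pos ⟨e, he⟩, he]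
      exact hp1.symm
  · -- neither singleton: use h2
    have e : (fun i => mergeHom h1 h2 (t i)) = (fun i => h2 (t i)) := by
      funext i
      fin_cases i
      · exact if_neg s0
      · exact if_neg s1
    rw [e]
    exact H2 R t ht

lemma exists_allsingleton {A : RelStruct sig3} (hfin : Finite A.carrier)
    (hA : Nonempty A.carrier) (hpacc : PACC A twoSat) :
    ∃ H, IsHom A (PowStruct twoSat) H ∧ ∀ a, ∃ b, (H a).val = {b} := by
  have key : ∀ L : List A.carrier, ∃ H, IsHom A (PowStruct twoSat) H ∧
      ∀ a ∈ L, ∃ b, (H a).val = {b} := by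
    intro L
    induction L with
    | nil =>
      obtain ⟨a⟩ := hA
      obtain ⟨h, hh, _⟩ := hpacc a
      exact ⟨h, hh, by simp⟩
    | cons a L ih =>
      obtain ⟨H, hH, hs⟩ := ih
      obtain ⟨h, hh, hb⟩ := hpacc a
      refine ⟨mergeHom h H, merge_isHom hh hH, ?_⟩
      intro x hx
      by_cases hsx : ∃ b, (h x).val = {b}
      · show ∃ b, (mergeHom h H x).val = {b}
        rw [mergeHom, if_pos hsx]
        exact hsx
      · show ∃ b, (mergeHom h H x).val = {b}
        rw [mergeHom, if_neg hsx]
        rcases List.mem_cons.mp hx with rfl | hxL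
        · exact absurd hb hsx
        · exact hs x hxL
  have := Fintype.ofFinite A.carrier
  obtain ⟨H, hH, hs⟩ := key (Finset.univ.toList)
  exact ⟨H, hH, fun a => hs a (by simp)⟩

lemma extract {σ : RelSig} {A B : RelStruct σ} {H : A.carrier → (PowStruct B).carrier}
    (hH : IsHom A (PowStruct B) H) (hs : ∀ a, ∃ b, (H a).val = {b}) : HomTo A B := by
  choose g hg using hs
  refine ⟨g, ?_⟩
  intro R t ht
  obtain ⟨S, hSne, hSsub, hproj⟩ := hH R t ht
  obtain ⟨s, hsS⟩ := hSne
  have heq : (fun i => g (t i)) = s := by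
    funext i
    have h1 : s i ∈ (fun u => u i) '' S := ⟨s, hsS, rfl⟩
    rw [← hproj i, hg (t i)] at h1
    exact h1.symm
  rw [heq]
  exact hSsub hsS

/-- PAC decides `CSP(B)` for the 2-SAT structure `B`. -/
theorem PAC_decides_twoSat : PACdecides twoSat := by
  intro A hfin hpacc
  rcases isEmpty_or_nonempty A.carrier with h | h
  · exact ⟨fun x => isEmptyElim x, fun R t ht => isEmptyElim (t 0)⟩
  · obtain ⟨H, hH, hs⟩ := exists_allsingleton hfin h hpacc
    exact extract hH hs
end

section
/- Let G be an undirected bipartite graph, regarded as a structure over the signature {E} with E binary. Then PAC decides CSP(G): for every finite structure A over the signature {E}, if (A, G) has the PACC then A → G. -/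
section PACaux

/-- Adjacency relation induced on the instance `A` by its binary relation. -/
def AdjA (A : RelStruct graphSig) (x y : A.carrier) : Prop :=
  ∃ t ∈ A.rel (), (t 0 = x ∧ t 1 = y) ∨ (t 0 = y ∧ t 1 = x)

lemma AdjA.symm {A : RelStruct graphSig} {x y : A.carrier} (h : AdjA A x y) : AdjA A y x := by
  obtain ⟨t, ht, hc⟩ := h
  exact ⟨t, ht, hc.symm⟩

/-- Parity-tracking step relation on `A.carrier × Bool`. -/
def StepA (A : RelStruct graphSig) (z w : A.carrier × Bool) : Prop :=
  AdjA A z.1 w.1 ∧ w.2 = !z.2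

lemma StepA.symm {A : RelStruct graphSig} : Symmetric (StepA A) := by
  rintro ⟨x, p⟩ ⟨y, q⟩ ⟨hadj, hq⟩
  refine ⟨hadj.symm, ?_⟩
  subst hq; simp

lemma rtg_flip {A : RelStruct graphSig} :
    ∀ {z w : A.carrier × Bool}, Relation.ReflTransGen (StepA A) z w →
      Relation.ReflTransGen (StepA A) (z.1, !z.2) (w.1, !w.2) := by
  intro z w h
  induction h with
  | refl => exact .refl
  | @tail b c _hab hbc ih => exact ih.tail ⟨hbc.1, by rw [hbc.2]⟩

/-- Arc consistency transfer: along an edge of `A`, a homomorphism to the power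
structure pushes one side of the bipartition to the other. -/
lemma pow_adj_subset {A G : RelStruct graphSig}
    {h : A.carrier → (PowStruct G).carrier} (hh : IsHom A (PowStruct G) h)
    {W Z : Set G.carrier}
    (hWZ : ∀ s ∈ G.rel (), s 0 ∈ W → s 1 ∈ Z)
    (hZW : ∀ s ∈ G.rel (), s 1 ∈ W → s 0 ∈ Z)
    {x y : A.carrier} (hxy : AdjA A x y) (hx : (h x).val ⊆ W) :
    (h y).val ⊆ Z := by
  obtain ⟨t, ht, hcase⟩ := hxy
  obtain ⟨S, hSne, hSsub, hproj⟩ := hh () t ht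
  rcases hcase with ⟨h0, h1⟩ | ⟨h0, h1⟩
  · intro g hg
    rw [← h1] at hg
    rw [hproj 1] at hg
    obtain ⟨s, hsS, hs1⟩ := hg
    have hs0 : s 0 ∈ (h x).val := by
      rw [← h0, hproj 0]; exact ⟨s, hsS, rfl⟩
    exact hs1 ▸ hWZ s (hSsub hsS) (hx hs0)
  · intro g hg
    rw [← h0] at hg
    rw [hproj 0] at hg
    obtain ⟨s, hsS, hs0⟩ := hg
    have hs1 : s 1 ∈ (h x).val := by
      rw [← h1, hproj 1]; exact ⟨s, hsS, rfl⟩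
    exact hs0 ▸ hZW s (hSsub hsS) (hx hs1)

/-- Singleton peek: the parity of a walk determines which side of the bipartition
the power-structure value lies in. -/
lemma parity_subset {A G : RelStruct graphSig}
    {h : A.carrier → (PowStruct G).carrier} (hh : IsHom A (PowStruct G) h)
    {W₀ W₁ : Set G.carrier}
    (c1 : ∀ s ∈ G.rel (), s 0 ∈ W₀ → s 1 ∈ W₁)
    (c2 : ∀ s ∈ G.rel (), s 1 ∈ W₀ → s 0 ∈ W₁)
    (c3 : ∀ s ∈ G.rel (), s 0 ∈ W₁ → s 1 ∈ W₀)
    (c4 : ∀ s ∈ G.rel (), s 1 ∈ W₁ → s 0 ∈ W₀)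
    {a : A.carrier} (ha : (h a).val ⊆ W₀) :
    ∀ z : A.carrier × Bool, Relation.ReflTransGen (StepA A) (a, false) z →
      (h z.1).val ⊆ cond z.2 W₁ W₀ := by
  intro z hz
  induction hz with
  | refl => exact ha
  | @tail b c _hab hbc ih =>
    obtain ⟨hadj, hflip⟩ := hbc
    cases hb : b.2 with
    | false =>
      rw [hb] at ih
      simp only [hflip, hb, Bool.not_false, cond_true, cond_false] at ih ⊢
      exact pow_adj_subset hh c1 c2 hadj ih
    | true =>
      rw [hb] at ih
      simp only [hflip, hb, Bool.not_true, cond_true, cond_false] at ih ⊢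
      exact pow_adj_subset hh c3 c4 hadj ih

end PACaux

/-- If `G` is an undirected bipartite graph, then PAC decides `CSP(G)`. -/
theorem PAC_decides_bipartite (G : RelStruct graphSig) (hfin : Finite G.carrier)
    (hsym : ∀ t ∈ G.rel (), ![t 1, t 0] ∈ G.rel ())
    (V₀ V₁ : Set G.carrier) (hdisj : V₀ ∩ V₁ = ∅) (hcover : V₀ ∪ V₁ = Set.univ)
    (hbip : ∀ t ∈ G.rel (), (t 0 ∈ V₀ ∧ t 1 ∈ V₁) ∨ (t 0 ∈ V₁ ∧ t 1 ∈ V₀)) :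
    PACdecides G := by
  classical
  intro A _hfinA hpacc
  have hside : ∀ x, x ∈ V₀ → x ∈ V₁ → False := by
    intro x h0 h1
    have : x ∈ V₀ ∩ V₁ := ⟨h0, h1⟩
    rw [hdisj] at this
    exact this
  have c1 : ∀ s ∈ G.rel (), s 0 ∈ V₀ → s 1 ∈ V₁ := by
    intro s hs h0
    rcases hbip s hs with ⟨_, h1⟩ | ⟨h0', _⟩
    · exact h1
    · exact (hside _ h0 h0').elim
  have c2 : ∀ s ∈ G.rel (), s 1 ∈ V₀ → s 0 ∈ V₁ := by
    intro s hs h1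
    rcases hbip s hs with ⟨_, h1'⟩ | ⟨h0, _⟩
    · exact (hside _ h1 h1').elim
    · exact h0
  have c3 : ∀ s ∈ G.rel (), s 0 ∈ V₁ → s 1 ∈ V₀ := by
    intro s hs h0
    rcases hbip s hs with ⟨h0', _⟩ | ⟨_, h1⟩
    · exact (hside _ h0' h0).elim
    · exact h1
  have c4 : ∀ s ∈ G.rel (), s 1 ∈ V₁ → s 0 ∈ V₀ := by
    intro s hs h1
    rcases hbip s hs with ⟨h0, _⟩ | ⟨_, h1'⟩
    · exact h0
    · exact (hside _ h1' h1).elim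
  -- parity uniqueness
  have hpar : ∀ (a x : A.carrier) (p q : Bool),
      Relation.ReflTransGen (StepA A) (a, false) (x, p) →
      Relation.ReflTransGen (StepA A) (a, false) (x, q) → p = q := by
    intro a x p q hp hq
    by_contra hpq
    obtain ⟨h, hh, b, hb⟩ := hpacc a
    have hbmem : b ∈ V₀ ∪ V₁ := by rw [hcover]; exact Set.mem_univ b
    have key : ∀ (W₀ W₁ : Set G.carrier),
        (∀ s ∈ G.rel (), s 0 ∈ W₀ → s 1 ∈ W₁) →
        (∀ s ∈ G.rel (), s 1 ∈ W₀ → s 0 ∈ W₁) →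
        (∀ s ∈ G.rel (), s 0 ∈ W₁ → s 1 ∈ W₀) →
        (∀ s ∈ G.rel (), s 1 ∈ W₁ → s 0 ∈ W₀) →
        (∀ y, y ∈ W₀ → y ∈ W₁ → False) →
        (h a).val ⊆ W₀ → False := by
      intro W₀ W₁ d1 d2 d3 d4 ddisj hsubW
      have H1 := parity_subset hh d1 d2 d3 d4 hsubW (x, p) hp
      have H2 := parity_subset hh d1 d2 d3 d4 hsubW (x, q) hq
      obtain ⟨g0, hg0⟩ := (h x).2
      cases p <;> cases q <;> simp_all
      · exact ddisj g0 (H1 hg0) (H2 hg0)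
      · exact ddisj g0 (H2 hg0) (H1 hg0)
    rcases hbmem with hb0 | hb1
    · exact key V₀ V₁ c1 c2 c3 c4 hside (by rw [hb]; exact Set.singleton_subset_iff.mpr hb0)
    · exact key V₁ V₀ c3 c4 c1 c2 (fun y hy0 hy1 => hside y hy1 hy0)
        (by rw [hb]; exact Set.singleton_subset_iff.mpr hb1)
  cases isEmpty_or_nonempty A.carrier with
  | inl hempty =>
    exact ⟨fun x => (IsEmpty.false x).elim, fun R t ht => (IsEmpty.false (t 0)).elim⟩
  | inr hne =>
    by_cases hE : ∃ t, t ∈ A.rel ()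
    · obtain ⟨t₀, ht₀⟩ := hE
      obtain ⟨h, hh, _⟩ := hpacc (t₀ 0)
      obtain ⟨S, hSne, hSsub, _⟩ := hh () t₀ ht₀
      obtain ⟨s, hs⟩ := hSne
      have hsE := hSsub hs
      have hseq : ![s 0, s 1] = s := by funext i; fin_cases i <;> rfl
      obtain ⟨u, v, hu, hv, huv, hvu⟩ :
          ∃ u v, u ∈ V₀ ∧ v ∈ V₁ ∧ ![u, v] ∈ G.rel () ∧ ![v, u] ∈ G.rel () := by
        rcases hbip s hsE with ⟨h0, h1⟩ | ⟨h0, h1⟩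
        · exact ⟨s 0, s 1, h0, h1, by rw [hseq]; exact hsE, hsym s hsE⟩
        · exact ⟨s 1, s 0, h1, h0, hsym s hsE, by rw [hseq]; exact hsE⟩
      -- setoid of connectivity
      have hEquiv : Equivalence (fun x y : A.carrier =>
          ∃ p, Relation.ReflTransGen (StepA A) (x, false) (y, p)) := by
        constructor
        · intro x; exact ⟨false, .refl⟩
        · rintro x y ⟨p, hp⟩
          have hsymm := (@Relation.ReflTransGen.stdSymm _ (StepA A) ⟨StepA.symm⟩).symm _ _ hp
          cases p with
          | false => exact ⟨false, hsymm⟩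
          | true => exact ⟨true, rtg_flip hsymm⟩
        · rintro x y z ⟨p, hp⟩ ⟨q, hq⟩
          cases p with
          | false => exact ⟨q, hp.trans hq⟩
          | true => exact ⟨!q, hp.trans (rtg_flip hq)⟩
      let st : Setoid A.carrier := ⟨_, hEquiv⟩
      let rep : A.carrier → A.carrier := fun x => (Quotient.mk st x).out
      have hrep : ∀ x, ∃ p, Relation.ReflTransGen (StepA A) (rep x, false) (x, p) :=
        fun x => Quotient.mk_out (s := st) x
      have hreq : ∀ x y, (∃ p, Relation.ReflTransGen (StepA A) (x, false) (y, p)) →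
          rep x = rep y := by
        intro x y hxy
        have : (Quotient.mk st x) = (Quotient.mk st y) := Quotient.sound hxy
        simp only [rep, this]
      let c : A.carrier → Bool := fun x => Classical.choose (hrep x)
      have cspec : ∀ x, Relation.ReflTransGen (StepA A) (rep x, false) (x, c x) :=
        fun x => Classical.choose_spec (hrep x)
      have hcol : ∀ x y, AdjA A x y → c x ≠ c y := by
        intro x y hadj hcontra
        have hrxy : ∃ p, Relation.ReflTransGen (StepA A) (x, false) (y, p) :=
          ⟨true, Relation.ReflTransGen.single ⟨hadj, rfl⟩⟩
        have hrepeq := hreq x y hrxy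
        have h1 : Relation.ReflTransGen (StepA A) (rep x, false) (y, !c x) :=
          (cspec x).tail ⟨hadj, rfl⟩
        have h2 : Relation.ReflTransGen (StepA A) (rep x, false) (y, c y) := by
          rw [hrepeq]; exact cspec y
        have := hpar (rep x) y (!c x) (c y) h1 h2
        rw [hcontra] at this
        simp at this
      refine ⟨fun x => cond (c x) v u, ?_⟩
      intro R t ht
      have hadj : AdjA A (t 0) (t 1) := ⟨t, ht, Or.inl ⟨rfl, rfl⟩⟩
      have hnecol := hcol _ _ hadj
      have heq : (fun i => cond (c (t i)) v u) =
          ![cond (c (t 0)) v u, cond (c (t 1)) v u] := by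
        funext i; fin_cases i <;> rfl
      show (fun i => cond (c (t i)) v u) ∈ G.rel R
      rw [heq]
      cases h0 : c (t 0) <;> cases h1 : c (t 1) <;> rw [h0, h1] at hnecol <;>
        simp only [cond_true, cond_false]
      · exact absurd rfl hnecol
      · exact huv
      · exact hvu
      · exact absurd rfl hnecol
    · obtain ⟨a⟩ := hne
      obtain ⟨h, hh, b, hb⟩ := hpacc a
      exact ⟨fun _ => b, fun R t ht => (hE ⟨t, ht⟩).elim⟩
end

section
/- Let D be an unbalanced orientation of a cycle, regarded as a structure over the signature {A} with A binary. Then PAC decides CSP(D): for every finite structure C over the signature {A}, if (C, D) has the PACC then C → D. -/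
noncomputable section CycleAux
open Classical

variable (D : RelStruct graphSig) {n : ℕ} (hn : 0 < n) (e : Fin n ≃ D.carrier)

/-- Edge relation transported to `Fin n`. -/
def EdR (u v : Fin n) : Prop := ![e u, e v] ∈ D.rel ()

/-- orientation step: +1 if edge i → i+1 is forward. -/
def stepf (j : ℕ) : ℤ :=
  if EdR D e ⟨j % n, Nat.mod_lt _ hn⟩ (cycSucc hn ⟨j % n, Nat.mod_lt _ hn⟩) then 1 else -1

/-- height function along the walk. -/
def lamf (j : ℕ) : ℤ := ∑ i ∈ Finset.range j, stepf D hn e i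

/-- net winding number. -/
def qq : ℤ := lamf D hn e n

lemma lamf_succ (j : ℕ) : lamf D hn e (j + 1) = lamf D hn e j + stepf D hn e j := by
  simp [lamf, Finset.sum_range_succ]

lemma lamf_parity (j : ℕ) : (2 : ℤ) ∣ (lamf D hn e j - j) := by
  induction j with
  | zero => simp [lamf]
  | succ j ih =>
    rw [lamf_succ]
    rcases ih with ⟨c, hc⟩
    unfold stepf
    split <;> (push_cast; omega)

lemma stepf_eq_one {j : ℕ} (hj : j < n)
    (h : EdR D e ⟨j, hj⟩ (cycSucc hn ⟨j, hj⟩)) : stepf D hn e j = 1 := by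
  have hmod : (⟨j % n, Nat.mod_lt _ hn⟩ : Fin n) = ⟨j, hj⟩ := by
    simp [Fin.ext_iff, Nat.mod_eq_of_lt hj]
  rw [stepf, hmod, if_pos h]

lemma stepf_eq_neg_one {j : ℕ} (hj : j < n)
    (h : ¬ EdR D e ⟨j, hj⟩ (cycSucc hn ⟨j, hj⟩)) : stepf D hn e j = -1 := by
  have hmod : (⟨j % n, Nat.mod_lt _ hn⟩ : Fin n) = ⟨j, hj⟩ := by
    simp [Fin.ext_iff, Nat.mod_eq_of_lt hj]
  rw [stepf, hmod, if_neg h]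

lemma lamf_zero : lamf D hn e 0 = 0 := by simp [lamf]

lemma qq_ne_zero
    (hunbal : 2 * {i : Fin n | ![e i, e (cycSucc hn i)] ∈ D.rel ()}.ncard ≠ n) :
    qq D hn e ≠ 0 := by
  classical
  have hsum : qq D hn e = ∑ i : Fin n, stepf D hn e i.val := by
    rw [qq, lamf, Finset.sum_range fun i => stepf D hn e i]
  have hstep : ∀ i : Fin n, stepf D hn e i.val =
      if EdR D e i (cycSucc hn i) then 1 else -1 := by
    intro i
    by_cases h : EdR D e i (cycSucc hn i)
    · rw [stepf_eq_one D hn e i.isLt (by simpa using h), if_pos h]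
    · rw [stepf_eq_neg_one D hn e i.isLt (by simpa using h), if_neg h]
  set F := Finset.univ.filter (fun i : Fin n => EdR D e i (cycSucc hn i)) with hF
  have hsum2 : qq D hn e = 2 * (F.card : ℤ) - n := by
    rw [hsum]
    have : ∀ i : Fin n, stepf D hn e i.val =
        (if EdR D e i (cycSucc hn i) then (2:ℤ) else 0) - 1 := by
      intro i; rw [hstep i]; split <;> ring
    rw [Finset.sum_congr rfl fun i _ => this i, Finset.sum_sub_distrib]
    simp [Finset.sum_ite, hF, mul_comm]
  have hncard : {i : Fin n | ![e i, e (cycSucc hn i)] ∈ D.rel ()}.ncard = F.card := by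
    rw [Set.ncard_eq_toFinset_card']
    congr 1
    ext i
    simp [hF, EdR]
    exact ⟨fun h => Finset.mem_filter.mpr ⟨Finset.mem_univ _, h⟩, fun h => (Finset.mem_filter.mp h).2⟩
  intro h0
  rw [hsum2] at h0
  apply hunbal
  rw [hncard]
  omega

lemma vec2_eta {X : Type _} (v : Fin 2 → X) : ![v 0, v 1] = v := by
  funext i; fin_cases i <;> simp

lemma vec2_eq {X : Type _} {a b c d : X} (h : ![a, b] = ![c, d]) : a = c ∧ b = d :=
  ⟨by simpa using congrFun h 0, by simpa using congrFun h 1⟩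

lemma edge_cases
    (hxor : ∀ i : Fin n,
      Xor' (![e i, e (cycSucc hn i)] ∈ D.rel ()) (![e (cycSucc hn i), e i] ∈ D.rel ()))
    (hno : ∀ t ∈ D.rel (), ∃ i : Fin n,
      t = ![e i, e (cycSucc hn i)] ∨ t = ![e (cycSucc hn i), e i])
    {u v : Fin n} (h : EdR D e u v) :
    (v = cycSucc hn u ∧ lamf D hn e (u.val + 1) = lamf D hn e u.val + 1) ∨
    (u = cycSucc hn v ∧ lamf D hn e (v.val + 1) = lamf D hn e v.val - 1) := by
  obtain ⟨i, hi | hi⟩ := hno _ h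
  · obtain ⟨h1, h2⟩ := vec2_eq hi
    have hu : u = i := e.injective h1
    have hv : v = cycSucc hn u := by rw [hu]; exact e.injective h2
    left
    refine ⟨hv, ?_⟩
    rw [lamf_succ, stepf_eq_one D hn e u.isLt (by rw [Fin.eta]; rw [hv] at h; exact h)]
  · obtain ⟨h1, h2⟩ := vec2_eq hi
    have hv : v = i := e.injective h2
    have hu : u = cycSucc hn v := by rw [hv]; exact e.injective h1
    right
    refine ⟨hu, ?_⟩
    have hnd : ¬ EdR D e v (cycSucc hn v) := by
      rcases hxor v with ⟨_, hb⟩ | ⟨_, hb⟩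
      · exact fun hc => hb (by rw [hu] at h; exact h)
      · exact hb
    rw [lamf_succ, stepf_eq_neg_one D hn e v.isLt (by rw [Fin.eta]; exact hnd)]
    ring

/-- positive period. -/
def Qv : ℤ := ((qq D hn e).natAbs : ℤ)

lemma Qv_dvd : Qv D hn e ∣ qq D hn e := Int.natAbs_dvd.mpr dvd_rfl

lemma Qv_dvd_iff {c : ℤ} : Qv D hn e ∣ c ↔ qq D hn e ∣ c := Int.natAbs_dvd

lemma Qv_pos (hq : qq D hn e ≠ 0) : 0 < Qv D hn e := by
  simp only [Qv]
  exact_mod_cast Int.natAbs_pos.mpr hq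

lemma emod_add_qq (a : ℤ) : (a + qq D hn e) % Qv D hn e = a % Qv D hn e := by
  rw [Int.add_emod, Int.emod_eq_zero_of_dvd (Qv_dvd D hn e), add_zero,
    Int.emod_emod_of_dvd a dvd_rfl]

lemma emod_sub_qq (a : ℤ) : (a - qq D hn e) % Qv D hn e = a % Qv D hn e := by
  rw [Int.sub_emod, Int.emod_eq_zero_of_dvd (Qv_dvd D hn e), sub_zero,
    Int.emod_emod_of_dvd a dvd_rfl]

/-- height of the canonical lift of `x` in the window `[β, β+|q|)`. -/
def Hkey (β : ℤ) (x : Fin n) : ℤ := β + (lamf D hn e x.val - β) % Qv D hn e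

/-- the number of the period copy used. -/
def kkey (β : ℤ) (x : Fin n) : ℤ := (Hkey D hn e β x - lamf D hn e x.val) / qq D hn e

/-- index of that lift. -/
def Ikey (β : ℤ) (x : Fin n) : ℤ := x.val + n * kkey D hn e β x

/-- the full lexicographic key. -/
def KeyL (β : ℤ) (x : Fin n) : ℤ ×ₗ ℤ := toLex (Hkey D hn e β x, Ikey D hn e β x)

lemma qq_dvd_sub (β : ℤ) (x : Fin n) :
    qq D hn e ∣ (Hkey D hn e β x - lamf D hn e x.val) := by
  rw [← Qv_dvd_iff]
  have : Hkey D hn e β x - lamf D hn e x.val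
      = -(Qv D hn e * ((lamf D hn e x.val - β) / Qv D hn e)) := by
    rw [Hkey]
    have := Int.emod_def (lamf D hn e x.val - β) (Qv D hn e)
    omega
  rw [this]
  exact dvd_neg.mpr (dvd_mul_right _ _)

lemma kkey_mul (β : ℤ) (x : Fin n) :
    kkey D hn e β x * qq D hn e = Hkey D hn e β x - lamf D hn e x.val :=
  Int.ediv_mul_cancel (qq_dvd_sub D hn e β x)

lemma key_parity (β : ℤ) (x : Fin n) :
    (2 : ℤ) ∣ (Hkey D hn e β x - Ikey D hn e β x) := by
  obtain ⟨c1, h1⟩ := lamf_parity D hn e x.val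
  obtain ⟨c2, h2⟩ := lamf_parity D hn e n
  have hk := kkey_mul D hn e β x
  refine ⟨c1 + kkey D hn e β x * c2, ?_⟩
  have hq : qq D hn e = lamf D hn e n := rfl
  rw [Ikey]
  linear_combination (-1) * hk + h1 + kkey D hn e β x * h2 + kkey D hn e β x * hq

lemma Ikey_inj (β : ℤ) {x y : Fin n} (h : Ikey D hn e β x = Ikey D hn e β y) : x = y := by
  have hx : Ikey D hn e β x % n = x.val := by
    rw [Ikey, Int.add_mul_emod_self_left, Int.emod_eq_of_lt (by positivity) (by exact_mod_cast x.isLt)]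
  have hy : Ikey D hn e β y % n = y.val := by
    rw [Ikey, Int.add_mul_emod_self_left, Int.emod_eq_of_lt (by positivity) (by exact_mod_cast y.isLt)]
  apply Fin.ext
  rw [h] at hx
  omega

lemma key_deck (hq : qq D hn e ≠ 0) (β : ℤ) (x : Fin n) :
    Hkey D hn e (β + qq D hn e) x = Hkey D hn e β x + qq D hn e ∧
    Ikey D hn e (β + qq D hn e) x = Ikey D hn e β x + n := by
  have hH : Hkey D hn e (β + qq D hn e) x = Hkey D hn e β x + qq D hn e := by
    rw [Hkey, Hkey]
    have : lamf D hn e x.val - (β + qq D hn e) = lamf D hn e x.val - β - qq D hn e := by ring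
    rw [this, emod_sub_qq]
    ring
  refine ⟨hH, ?_⟩
  have hk : kkey D hn e (β + qq D hn e) x = kkey D hn e β x + 1 := by
    have h1 := kkey_mul D hn e (β + qq D hn e) x
    have h2 := kkey_mul D hn e β x
    rw [hH] at h1
    have : (kkey D hn e (β + qq D hn e) x - (kkey D hn e β x + 1)) * qq D hn e = 0 := by
      nlinarith [h1, h2]
    rcases mul_eq_zero.mp this with h | h
    · omega
    · exact absurd h hq
  rw [Ikey, Ikey, hk]
  ring

lemma cycSucc_val_lt {i : Fin n} (h : i.val + 1 < n) : (cycSucc hn i).val = i.val + 1 :=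
  Nat.mod_eq_of_lt h

lemma cycSucc_val_eq {i : Fin n} (h : i.val + 1 = n) : (cycSucc hn i).val = 0 := by
  simp [cycSucc, h]

lemma qq_cancel (hq : qq D hn e ≠ 0) {a b : ℤ} (h : a * qq D hn e = b * qq D hn e) :
    a = b := mul_right_cancel₀ hq h

lemma key_step (hq : qq D hn e ≠ 0)
    (hxor : ∀ i : Fin n,
      Xor' (![e i, e (cycSucc hn i)] ∈ D.rel ()) (![e (cycSucc hn i), e i] ∈ D.rel ()))
    (hno : ∀ t ∈ D.rel (), ∃ i : Fin n,
      t = ![e i, e (cycSucc hn i)] ∨ t = ![e (cycSucc hn i), e i])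
    {u v : Fin n} (h : EdR D e u v) (β : ℤ) :
    Hkey D hn e (β + 1) v = Hkey D hn e β u + 1 ∧
    (Ikey D hn e (β + 1) v = Ikey D hn e β u + 1 ∨
     Ikey D hn e (β + 1) v = Ikey D hn e β u - 1) := by
  rcases edge_cases D hn e hxor hno h with ⟨hv, hl⟩ | ⟨hu, hl⟩
  · by_cases hlt : u.val + 1 < n
    · have hvval : v.val = u.val + 1 := by rw [hv]; exact cycSucc_val_lt hn hlt
      have hlam : lamf D hn e v.val = lamf D hn e u.val + 1 := by rw [hvval]; exact hl
      have hH : Hkey D hn e (β + 1) v = Hkey D hn e β u + 1 := by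
        rw [Hkey, Hkey]
        have e1 : lamf D hn e u.val - β = lamf D hn e v.val - (β + 1) := by omega
        rw [e1]; ring
      refine ⟨hH, Or.inl ?_⟩
      have hk : kkey D hn e (β + 1) v = kkey D hn e β u := by
        apply qq_cancel D hn e hq
        rw [kkey_mul, kkey_mul]; omega
      rw [Ikey, Ikey, hk, hvval]; push_cast; ring
    · have hn1 : u.val + 1 = n := by have := u.isLt; omega
      have hvval : v.val = 0 := by rw [hv]; exact cycSucc_val_eq hn hn1
      have hlam0 : lamf D hn e v.val = 0 := by rw [hvval]; exact lamf_zero D hn e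
      have hqeq : qq D hn e = lamf D hn e u.val + 1 := by rw [hn1] at hl; rw [qq]; omega
      have hH : Hkey D hn e (β + 1) v = Hkey D hn e β u + 1 := by
        rw [Hkey, Hkey]
        have e1 : lamf D hn e u.val - β = (lamf D hn e v.val - (β + 1)) + qq D hn e := by
          omega
        rw [e1, emod_add_qq]; ring
      refine ⟨hH, Or.inl ?_⟩
      have hk : kkey D hn e (β + 1) v = kkey D hn e β u + 1 := by
        apply qq_cancel D hn e hq
        rw [add_mul, kkey_mul, kkey_mul]; omega
      rw [Ikey, Ikey, hk, hvval]
      have : (u.val : ℤ) = (n : ℤ) - 1 := by omega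
      rw [this]; push_cast; ring
  · by_cases hlt : v.val + 1 < n
    · have huval : u.val = v.val + 1 := by rw [hu]; exact cycSucc_val_lt hn hlt
      have hlam : lamf D hn e v.val = lamf D hn e u.val + 1 := by
        rw [huval]; omega
      have hH : Hkey D hn e (β + 1) v = Hkey D hn e β u + 1 := by
        rw [Hkey, Hkey]
        have e1 : lamf D hn e u.val - β = lamf D hn e v.val - (β + 1) := by omega
        rw [e1]; ring
      refine ⟨hH, Or.inr ?_⟩
      have hk : kkey D hn e (β + 1) v = kkey D hn e β u := by
        apply qq_cancel D hn e hq
        rw [kkey_mul, kkey_mul]; omega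
      rw [Ikey, Ikey, hk, huval]; push_cast; ring
    · have hn1 : v.val + 1 = n := by have := v.isLt; omega
      have huval : u.val = 0 := by rw [hu]; exact cycSucc_val_eq hn hn1
      have hlam0 : lamf D hn e u.val = 0 := by rw [huval]; exact lamf_zero D hn e
      have hqeq : qq D hn e = lamf D hn e v.val - 1 := by rw [hn1] at hl; rw [qq]; omega
      have hH : Hkey D hn e (β + 1) v = Hkey D hn e β u + 1 := by
        rw [Hkey, Hkey]
        have e1 : lamf D hn e u.val - β = (lamf D hn e v.val - (β + 1)) - qq D hn e := by
          omega
        rw [e1, emod_sub_qq]; ring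
      refine ⟨hH, Or.inr ?_⟩
      have hk : kkey D hn e (β + 1) v = kkey D hn e β u - 1 := by
        apply qq_cancel D hn e hq
        rw [sub_mul, kkey_mul, kkey_mul]; omega
      rw [Ikey, Ikey, hk, huval]
      have : (v.val : ℤ) = (n : ℤ) - 1 := by omega
      rw [this]; push_cast; ring

lemma level_step
    (hxor : ∀ i : Fin n,
      Xor' (![e i, e (cycSucc hn i)] ∈ D.rel ()) (![e (cycSucc hn i), e i] ∈ D.rel ()))
    (hno : ∀ t ∈ D.rel (), ∃ i : Fin n,
      t = ![e i, e (cycSucc hn i)] ∨ t = ![e (cycSucc hn i), e i])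
    {u v : Fin n} (h : EdR D e u v) :
    lamf D hn e v.val = lamf D hn e u.val + 1 ∨
    lamf D hn e v.val = lamf D hn e u.val + 1 - qq D hn e ∨
    lamf D hn e v.val = lamf D hn e u.val + 1 + qq D hn e := by
  rcases edge_cases D hn e hxor hno h with ⟨hv, hl⟩ | ⟨hu, hl⟩
  · by_cases hlt : u.val + 1 < n
    · have hvval : v.val = u.val + 1 := by rw [hv]; exact cycSucc_val_lt hn hlt
      left; rw [hvval]; exact hl
    · have hn1 : u.val + 1 = n := by have := u.isLt; omega
      have hvval : v.val = 0 := by rw [hv]; exact cycSucc_val_eq hn hn1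
      have hlam0 : lamf D hn e v.val = 0 := by rw [hvval]; exact lamf_zero D hn e
      have hqeq : qq D hn e = lamf D hn e u.val + 1 := by rw [hn1] at hl; rw [qq]; omega
      right; left; omega
  · by_cases hlt : v.val + 1 < n
    · have huval : u.val = v.val + 1 := by rw [hu]; exact cycSucc_val_lt hn hlt
      left; rw [← huval] at hl; omega
    · have hn1 : v.val + 1 = n := by have := v.isLt; omega
      have huval : u.val = 0 := by rw [hu]; exact cycSucc_val_eq hn hn1
      have hlam0 : lamf D hn e u.val = 0 := by rw [huval]; exact lamf_zero D hn e
      have hqeq : qq D hn e = lamf D hn e v.val - 1 := by rw [hn1] at hl; rw [qq]; omega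
      right; right; omega

def IsMinK (β : ℤ) (U : Set (Fin n)) (u : Fin n) : Prop :=
  u ∈ U ∧ ∀ y ∈ U, KeyL D hn e β u ≤ KeyL D hn e β y

lemma exists_minK (β : ℤ) {U : Set (Fin n)} (hU : U.Nonempty) :
    ∃ u, IsMinK D hn e β U u := by
  obtain ⟨a, ha, hmin⟩ := Set.exists_min_image U (KeyL D hn e β) (Set.toFinite U) hU
  exact ⟨a, ha, hmin⟩

lemma minK_unique (β : ℤ) {U : Set (Fin n)} {u u' : Fin n}
    (h : IsMinK D hn e β U u) (h' : IsMinK D hn e β U u') : u = u' := by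
  have heq : KeyL D hn e β u = KeyL D hn e β u' :=
    le_antisymm (h.2 u' h'.1) (h'.2 u h.1)
  have hI : Ikey D hn e β u = Ikey D hn e β u' := congrArg (fun p => (ofLex p).2) heq
  exact Ikey_inj D hn e β hI

def minK (β : ℤ) (U : Set (Fin n)) : Fin n :=
  if h : ∃ u, IsMinK D hn e β U u then h.choose else ⟨0, hn⟩

lemma minK_spec (β : ℤ) {U : Set (Fin n)} (hU : U.Nonempty) :
    IsMinK D hn e β U (minK D hn e β U) := by
  rw [minK, dif_pos (exists_minK D hn e β hU)]
  exact (exists_minK D hn e β hU).choose_spec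

lemma keyL_le_shift (hq : qq D hn e ≠ 0) (β : ℤ) (x y : Fin n) :
    KeyL D hn e (β + qq D hn e) x ≤ KeyL D hn e (β + qq D hn e) y ↔
    KeyL D hn e β x ≤ KeyL D hn e β y := by
  obtain ⟨hx1, hx2⟩ := key_deck D hn e hq β x
  obtain ⟨hy1, hy2⟩ := key_deck D hn e hq β y
  rw [KeyL, KeyL, KeyL, KeyL, Prod.Lex.le_iff, Prod.Lex.le_iff]
  simp only [hx1, hx2, hy1, hy2, ofLex_toLex]
  constructor <;> intro h <;> [skip; skip] <;> rcases h with h | ⟨h1, h2⟩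
  · left; omega
  · right; omega
  · left; omega
  · right; omega

lemma minK_shift (hq : qq D hn e ≠ 0) (β : ℤ) {U : Set (Fin n)} (hU : U.Nonempty) :
    minK D hn e (β + qq D hn e) U = minK D hn e β U := by
  have h1 := minK_spec D hn e (β + qq D hn e) hU
  have h2 := minK_spec D hn e β hU
  have h3 : IsMinK D hn e (β + qq D hn e) U (minK D hn e β U) :=
    ⟨h2.1, fun y hy => (keyL_le_shift D hn e hq β _ y).mpr (h2.2 y hy)⟩
  exact minK_unique D hn e _ h1 h3

lemma minK_shift' (hq : qq D hn e ≠ 0) (β : ℤ) {U : Set (Fin n)} (hU : U.Nonempty) :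
    minK D hn e (β - qq D hn e) U = minK D hn e β U := by
  have := minK_shift D hn e hq (β - qq D hn e) hU
  rw [sub_add_cancel] at this
  exact this.symm

lemma minK_singleton (β : ℤ) (c : Fin n) : minK D hn e β {c} = c := by
  have := (minK_spec D hn e β (Set.singleton_nonempty c)).1
  simpa using this

lemma set_step (hq : qq D hn e ≠ 0)
    (hxor : ∀ i : Fin n,
      Xor' (![e i, e (cycSucc hn i)] ∈ D.rel ()) (![e (cycSucc hn i), e i] ∈ D.rel ()))
    (hno : ∀ t ∈ D.rel (), ∃ i : Fin n,
      t = ![e i, e (cycSucc hn i)] ∨ t = ![e (cycSucc hn i), e i])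
    {S : Set (Fin n × Fin n)} (hS : S.Nonempty)
    (hSE : ∀ p ∈ S, EdR D e p.1 p.2) {b b' : Fin n} (hbb : EdR D e b b') :
    EdR D e (minK D hn e (lamf D hn e b.val) (Prod.fst '' S))
      (minK D hn e (lamf D hn e b'.val) (Prod.snd '' S)) := by
  set β := lamf D hn e b.val with hβ
  have hU : (Prod.fst '' S).Nonempty := hS.image _
  have hV : (Prod.snd '' S).Nonempty := hS.image _
  have hVeq : minK D hn e (lamf D hn e b'.val) (Prod.snd '' S)
      = minK D hn e (β + 1) (Prod.snd '' S) := by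
    rcases level_step D hn e hxor hno hbb with hL | hL | hL
    · rw [hL]
    · rw [hL]
      have := minK_shift' D hn e hq (β + 1) hV
      rw [show β + 1 - qq D hn e = lamf D hn e b.val + 1 - qq D hn e from by rw [hβ]] at this
      exact this
    · rw [hL]
      have := minK_shift D hn e hq (β + 1) hV
      rw [show β + 1 + qq D hn e = lamf D hn e b.val + 1 + qq D hn e from by rw [hβ]] at this
      exact this
  rw [hVeq]
  set x := minK D hn e β (Prod.fst '' S) with hxdef
  set y' := minK D hn e (β + 1) (Prod.snd '' S) with hydef
  have hxmin := minK_spec D hn e β hU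
  have hymin := minK_spec D hn e (β + 1) hV
  obtain ⟨p, hp, hpx⟩ := hxmin.1
  obtain ⟨r, hr, hry⟩ := hymin.1
  rw [← hxdef] at hpx
  rw [← hydef] at hry
  -- partners
  have hEx : EdR D e x p.2 := by rw [← hpx]; exact hSE p hp
  have hEy : EdR D e r.1 y' := by rw [← hry]; exact hSE r hr
  obtain ⟨s1H, s1I⟩ := key_step D hn e hq hxor hno hEx β
  obtain ⟨s2H, s2I⟩ := key_step D hn e hq hxor hno hEy β
  have m1 : KeyL D hn e β x ≤ KeyL D hn e β r.1 := hxmin.2 r.1 ⟨r, hr, rfl⟩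
  have m2 : KeyL D hn e (β + 1) y' ≤ KeyL D hn e (β + 1) p.2 := hymin.2 p.2 ⟨p, hp, rfl⟩
  rw [KeyL, KeyL, Prod.Lex.le_iff] at m1 m2
  simp only [ofLex_toLex] at m1 m2
  have par1 := key_parity D hn e β x
  have par2 := key_parity D hn e β r.1
  have hcase : Ikey D hn e β x = Ikey D hn e β r.1 ∨
      Ikey D hn e (β + 1) y' = Ikey D hn e (β + 1) p.2 := by
    rcases s1I with h1 | h1 <;> rcases s2I with h2 | h2 <;> omega
  rcases hcase with hc | hc
  · have : x = r.1 := Ikey_inj D hn e β hc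
    rw [this]; exact hEy
  · have : y' = p.2 := Ikey_inj D hn e (β + 1) hc
    rw [this]; exact hEx

/-- fold on the `D` side: pick the key-minimal element. -/
def foldD (b : D.carrier) (U : Set D.carrier) : D.carrier :=
  e (minK D hn e (lamf D hn e (e.symm b).val) (e.symm '' U))

lemma foldD_singleton (b c : D.carrier) : foldD D hn e b {c} = c := by
  rw [foldD, Set.image_singleton, minK_singleton]
  exact e.apply_symm_apply c

lemma foldD_step (hq : qq D hn e ≠ 0)
    (hxor : ∀ i : Fin n,
      Xor' (![e i, e (cycSucc hn i)] ∈ D.rel ()) (![e (cycSucc hn i), e i] ∈ D.rel ()))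
    (hno : ∀ t ∈ D.rel (), ∃ i : Fin n,
      t = ![e i, e (cycSucc hn i)] ∨ t = ![e (cycSucc hn i), e i])
    {S : Set (Fin 2 → D.carrier)} (hS : S.Nonempty)
    (hSE : S ⊆ D.rel ()) {b b' : D.carrier} (hbb : ![b, b'] ∈ D.rel ()) :
    ![foldD D hn e b ((fun s => s 0) '' S), foldD D hn e b' ((fun s => s 1) '' S)]
      ∈ D.rel () := by
  have hS'ne : ((fun s : Fin 2 → D.carrier => (e.symm (s 0), e.symm (s 1))) '' S).Nonempty :=
    hS.image _
  have hS'E : ∀ p ∈ (fun s : Fin 2 → D.carrier => (e.symm (s 0), e.symm (s 1))) '' S,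
      EdR D e p.1 p.2 := by
    rintro p ⟨s, hs, rfl⟩
    show ![e (e.symm (s 0)), e (e.symm (s 1))] ∈ D.rel ()
    rw [e.apply_symm_apply, e.apply_symm_apply, vec2_eta]
    exact hSE hs
  have hbb' : EdR D e (e.symm b) (e.symm b') := by
    show ![e (e.symm b), e (e.symm b')] ∈ D.rel ()
    rw [e.apply_symm_apply, e.apply_symm_apply]
    exact hbb
  have key := set_step D hn e hq hxor hno hS'ne hS'E hbb'
  have h1 : Prod.fst '' ((fun s : Fin 2 → D.carrier => (e.symm (s 0), e.symm (s 1))) '' S)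
      = e.symm '' ((fun s : Fin 2 → D.carrier => s 0) '' S) := by
    rw [Set.image_image, Set.image_image]
  have h2 : Prod.snd '' ((fun s : Fin 2 → D.carrier => (e.symm (s 0), e.symm (s 1))) '' S)
      = e.symm '' ((fun s : Fin 2 → D.carrier => s 1) '' S) := by
    rw [Set.image_image, Set.image_image]
  rw [h1, h2] at key
  exact key

variable (A : RelStruct graphSig)

/-- combine two maps into the power structure. -/
def combP (g h : A.carrier → (PowStruct D).carrier) :
    A.carrier → (PowStruct D).carrier :=
  fun x => ⟨(fun c => foldD D hn e c (g x).val) '' (h x).val, ((h x).2).image _⟩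

lemma combP_hom (hq : qq D hn e ≠ 0)
    (hxor : ∀ i : Fin n,
      Xor' (![e i, e (cycSucc hn i)] ∈ D.rel ()) (![e (cycSucc hn i), e i] ∈ D.rel ()))
    (hno : ∀ t ∈ D.rel (), ∃ i : Fin n,
      t = ![e i, e (cycSucc hn i)] ∨ t = ![e (cycSucc hn i), e i])
    {g h : A.carrier → (PowStruct D).carrier}
    (hgh : IsHom A (PowStruct D) g) (hhh : IsHom A (PowStruct D) h) :
    IsHom A (PowStruct D) (combP D hn e A g h) := by
  intro R t ht
  obtain ⟨Sg, hgne, hgsub, hgproj⟩ := hgh R t ht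
  obtain ⟨Sh, hhne, hhsub, hhproj⟩ := hhh R t ht
  refine ⟨(fun τ : Fin 2 → D.carrier =>
      ![foldD D hn e (τ 0) ((fun s : Fin 2 → D.carrier => s 0) '' Sg),
        foldD D hn e (τ 1) ((fun s : Fin 2 → D.carrier => s 1) '' Sg)]) '' Sh,
    hhne.image _, ?_, ?_⟩
  · rintro w ⟨τ, hτ, rfl⟩
    apply foldD_step D hn e hq hxor hno hgne hgsub
    rw [vec2_eta]
    exact hhsub hτ
  · intro i
    fin_cases i
    · show (combP D hn e A g h (t 0)).val = _
      rw [Set.image_image]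
      show (fun c => foldD D hn e c (g (t 0)).val) '' (h (t 0)).val = _
      rw [hgproj 0, hhproj 0, Set.image_image]
      rfl
    · show (combP D hn e A g h (t 1)).val = _
      rw [Set.image_image]
      show (fun c => foldD D hn e c (g (t 1)).val) '' (h (t 1)).val = _
      rw [hgproj 1, hhproj 1, Set.image_image]
      rfl

lemma combP_single_left {g h : A.carrier → (PowStruct D).carrier} {x : A.carrier}
    {c : D.carrier} (hc : (g x).val = {c}) : (combP D hn e A g h x).val = {c} := by
  show (fun d => foldD D hn e d (g x).val) '' (h x).val = {c}
  rw [hc]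
  ext z
  simp only [Set.mem_image, Set.mem_singleton_iff]
  constructor
  · rintro ⟨d, _, rfl⟩
    exact foldD_singleton D hn e d c
  · intro hz
    obtain ⟨d0, hd0⟩ := (h x).2
    exact ⟨d0, hd0, (foldD_singleton D hn e d0 c).trans hz.symm⟩

lemma combP_single_right {g h : A.carrier → (PowStruct D).carrier} {x : A.carrier}
    {d : D.carrier} (hd : (h x).val = {d}) :
    (combP D hn e A g h x).val = {foldD D hn e d (g x).val} := by
  show (fun c => foldD D hn e c (g x).val) '' (h x).val = _
  rw [hd, Set.image_singleton]

end CycleAux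

lemma all_singletons_hom {σ : RelSig} {A B : RelStruct σ}
    (g : A.carrier → (PowStruct B).carrier)
    (hg : IsHom A (PowStruct B) g) (hs : ∀ x, ∃ c, (g x).val = {c}) : HomTo A B := by
  choose c hc using hs
  refine ⟨c, ?_⟩
  intro R t ht
  obtain ⟨S, hSne, hSsub, hproj⟩ := hg R t ht
  obtain ⟨w, hw⟩ := hSne
  have hcw : (fun i => c (t i)) = w := by
    funext i
    have hmem : w i ∈ (g (t i)).val := by rw [hproj i]; exact ⟨w, hw, rfl⟩
    rw [hc (t i)] at hmem
    exact hmem.symm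
  rw [hcw]
  exact hSsub hw

/-- If `D` is an unbalanced orientation of a cycle, then PAC decides
`CSP(D)`. The universe of `D` is enumerated (cyclically) as `e 0, …, e (n-1)`; for each
`i` exactly one of the pairs `(e i, e (i+1))`, `(e (i+1), e i)` is an edge, there are no
other edges, and the number of forward edges is distinct from `n / 2`. -/
theorem PAC_decides_unbalanced_cycle (D : RelStruct graphSig) (hfin : Finite D.carrier)
    (n : ℕ) (hn : 0 < n) (e : Fin n ≃ D.carrier)
    (hxor : ∀ i : Fin n,
      Xor' (![e i, e (cycSucc hn i)] ∈ D.rel ()) (![e (cycSucc hn i), e i] ∈ D.rel ()))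
    (hno : ∀ t ∈ D.rel (), ∃ i : Fin n,
      t = ![e i, e (cycSucc hn i)] ∨ t = ![e (cycSucc hn i), e i])
    (hunbal : 2 * {i : Fin n | ![e i, e (cycSucc hn i)] ∈ D.rel ()}.ncard ≠ n) :
    PACdecides D := by
  classical
  intro A hAfin hpacc
  have hq := qq_ne_zero D hn e hunbal
  by_cases hA : Nonempty A.carrier
  · haveI := Fintype.ofFinite A.carrier
    have main : ∀ l : List A.carrier, l ≠ [] → ∃ g : A.carrier → (PowStruct D).carrier,
        IsHom A (PowStruct D) g ∧ ∀ a ∈ l, ∃ c, (g a).val = {c} := by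
      intro l
      induction l with
      | nil => exact fun h => absurd rfl h
      | cons a l ih =>
        intro _
        rcases eq_or_ne l [] with rfl | hl
        · obtain ⟨h, hh, c, hc⟩ := hpacc a
          refine ⟨h, hh, ?_⟩
          intro b hb
          rcases List.mem_singleton.mp hb with rfl
          exact ⟨c, hc⟩
        · obtain ⟨g, hg, hsing⟩ := ih hl
          obtain ⟨h, hh, c, hc⟩ := hpacc a
          refine ⟨combP D hn e A g h, combP_hom D hn e A hq hxor hno hg hh, ?_⟩
          intro b hb
          rcases List.mem_cons.mp hb with rfl | hb'
          · exact ⟨_, combP_single_right D hn e A hc⟩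
          · obtain ⟨c', hc'⟩ := hsing b hb'
            exact ⟨c', combP_single_left D hn e A hc'⟩
    have hlne : (Finset.univ : Finset A.carrier).toList ≠ [] := by
      rw [Ne, Finset.toList_eq_nil]
      exact Finset.univ_nonempty.ne_empty
    obtain ⟨g, hg, hsing⟩ := main (Finset.univ : Finset A.carrier).toList hlne
    exact all_singletons_hom g hg fun x => hsing x (by simp [Finset.mem_toList])
  · refine ⟨fun x => (hA ⟨x⟩).elim, ?_⟩
    intro R t ht
    exact (hA ⟨t 0⟩).elim
end

section
/- PAC decides CSP((ℚ; ≤, ≠)), where ≤ and ≠ are the usual order and disequality relations on the rational numbers: for every finite structure A over the signature {≤, ≠}, if (A, (ℚ; ≤, ≠)) has the PACC then A → (ℚ; ≤, ≠). -/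
section PACAux

variable (A : RelStruct sig2)

/-- One-step relation from ≤-edges of `A`. -/
def AStep (x y : A.carrier) : Prop := ∃ t ∈ A.rel 0, t 0 = x ∧ t 1 = y

/-- Reachability along ≤-edges. -/
def AReach : A.carrier → A.carrier → Prop := Relation.ReflTransGen (AStep A)

/-- SCC equivalence. -/
def ASetoid : Setoid A.carrier where
  r x y := AReach A x y ∧ AReach A y x
  iseqv := ⟨fun _ => ⟨.refl, .refl⟩, fun h => ⟨h.2, h.1⟩,
    fun h1 h2 => ⟨h1.1.trans h2.1, h2.2.trans h1.2⟩⟩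

/-- The SCC quotient. -/
abbrev AQuot := Quotient (ASetoid A)

instance : PartialOrder (AQuot A) where
  le := Quotient.lift₂ (fun x y => AReach A x y) (by
    intro a b a' b' ha hb
    exact propext ⟨fun h => ha.2.trans (h.trans hb.1), fun h => ha.1.trans (h.trans hb.2)⟩)
  le_refl q := by
    induction q using Quotient.ind
    exact Relation.ReflTransGen.refl
  le_trans q1 q2 q3 := by
    induction q1 using Quotient.ind
    induction q2 using Quotient.ind
    induction q3 using Quotient.ind
    exact fun h1 h2 => Relation.ReflTransGen.trans h1 h2
  le_antisymm q1 q2 := by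
    induction q1 using Quotient.ind
    induction q2 using Quotient.ind
    exact fun h1 h2 => Quotient.sound ⟨h1, h2⟩

theorem AQuot.mk_le_mk {x y : A.carrier} :
    ((⟦x⟧ : AQuot A) ≤ ⟦y⟧) ↔ AReach A x y := Iff.rfl

/-- The key consequence of the PACC: no ≠-edge inside an SCC. -/
theorem pacc_key (hP : PACC A ratStruct) :
    ∀ t ∈ A.rel 1, ¬ (AReach A (t 0) (t 1) ∧ AReach A (t 1) (t 0)) := by
  rintro t ht ⟨h01, h10⟩
  obtain ⟨h, hhom, q, hq⟩ := hP (t 0)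
  -- Forward propagation: along reachability from `t 0`, all values are ≥ q.
  have F : ∀ x, AReach A (t 0) x → ∀ v ∈ (h x).val, q ≤ v := by
    intro x hx
    induction hx with
    | refl =>
      intro v hv
      rw [hq] at hv
      exact le_of_eq hv.symm
    | @tail b c hab hbc ih =>
      obtain ⟨u, hu, hu0, hu1⟩ := hbc
      obtain ⟨S, hSne, hSsub, hproj⟩ := hhom 0 u hu
      intro v hv
      have hp0 : (h (u 0)).val = (fun s => s 0) '' S := hproj 0
      have hp1 : (h (u 1)).val = (fun s => s 1) '' S := hproj 1
      rw [← hu1, hp1] at hv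
      obtain ⟨s, hs, hs1⟩ := hv
      have hle : s 0 ≤ s 1 := hSsub hs
      have hmem : s 0 ∈ (h b).val := by
        rw [← hu0, hp0]; exact ⟨s, hs, rfl⟩
      calc q ≤ s 0 := ih _ hmem
        _ ≤ s 1 := hle
        _ = v := hs1
  -- Backward propagation: along reachability to `t 0`, all values are ≤ q.
  have B : ∀ x, AReach A x (t 0) → ∀ v ∈ (h x).val, v ≤ q := by
    intro x hx
    induction hx using Relation.ReflTransGen.head_induction_on with
    | refl =>
      intro v hv
      rw [hq] at hv
      exact le_of_eq hv
    | @head b c hbc hca ih =>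
      obtain ⟨u, hu, hu0, hu1⟩ := hbc
      obtain ⟨S, hSne, hSsub, hproj⟩ := hhom 0 u hu
      intro v hv
      have hp0 : (h (u 0)).val = (fun s => s 0) '' S := hproj 0
      have hp1 : (h (u 1)).val = (fun s => s 1) '' S := hproj 1
      rw [← hu0, hp0] at hv
      obtain ⟨s, hs, hs0⟩ := hv
      have hle : s 0 ≤ s 1 := hSsub hs
      have hmem : s 1 ∈ (h c).val := by
        rw [← hu1, hp1]; exact ⟨s, hs, rfl⟩
      calc v = s 0 := hs0.symm
        _ ≤ s 1 := hle
        _ ≤ q := ih _ hmem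
  -- Now the ≠-edge gives a contradiction.
  obtain ⟨S, hSne, hSsub, hproj⟩ := hhom 1 t ht
  obtain ⟨s, hs⟩ := hSne
  have hp0 : (h (t 0)).val = (fun s => s 0) '' S := hproj 0
  have hp1 : (h (t 1)).val = (fun s => s 1) '' S := hproj 1
  have hs0 : s 0 = q := by
    have : s 0 ∈ (h (t 0)).val := by rw [hp0]; exact ⟨s, hs, rfl⟩
    rw [hq] at this; exact this
  have hs1mem : s 1 ∈ (h (t 1)).val := by rw [hp1]; exact ⟨s, hs, rfl⟩
  have hs1 : s 1 = q :=
    le_antisymm (B _ h10 _ hs1mem) (F _ h01 _ hs1mem)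
  exact hSsub hs (hs0.trans hs1.symm)

end PACAux

/-- PAC decides `CSP((ℚ; ≤, ≠))`. -/
theorem PAC_decides_pointAlgebra : PACdecides ratStruct := by
  intro A hfin hP
  haveI := Fintype.ofFinite A.carrier
  haveI : Finite (AQuot A) := Quotient.finite _
  haveI : Fintype (AQuot A) := Fintype.ofFinite _
  haveI : Fintype (LinearExtension (AQuot A)) := ‹Fintype (AQuot A)›
  let e := (monoEquivOfFin (LinearExtension (AQuot A)) rfl).symm
  refine ⟨fun x => ((e (toLinearExtension ⟦x⟧)).val : ℚ), ?_⟩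
  intro R t ht
  match R with
  | ⟨0, _⟩ =>
    have h1 : AReach A (t 0) (t 1) :=
      Relation.ReflTransGen.single ⟨t, ht, rfl, rfl⟩
    have h2 : (⟦t 0⟧ : AQuot A) ≤ ⟦t 1⟧ := h1
    have h3 := e.monotone (toLinearExtension.monotone h2)
    show ((e (toLinearExtension ⟦t 0⟧)).val : ℚ) ≤ ((e (toLinearExtension ⟦t 1⟧)).val : ℚ)
    exact_mod_cast h3
  | ⟨1, _⟩ =>
    show ((e (toLinearExtension ⟦t 0⟧)).val : ℚ) ≠ ((e (toLinearExtension ⟦t 1⟧)).val : ℚ)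
    intro hEq
    have hv : e (toLinearExtension ⟦t 0⟧) = e (toLinearExtension ⟦t 1⟧) :=
      Fin.ext (Nat.cast_injective hEq)
    have hq : (⟦t 0⟧ : AQuot A) = ⟦t 1⟧ := e.injective hv
    exact pacc_key A hP t ht ⟨(Quotient.exact hq).1, (Quotient.exact hq).2⟩
end

section
/- Let B = (ℚ; ≤, ≠) and let A be a finite structure over the signature {≤, ≠}. Suppose there exist elements a₁,…,a_k ∈ A such that (aᵢ, aᵢ₊₁) ∈ ≤^A for all 1 ≤ i < k, (a_k, a₁) ∈ ≤^A, and (a_p, a_q) ∈ ≠^A for some p, q ∈ {1,…,k}. Then there is no homomorphism h from A to the power structure ℘(B) such that h(a₁) is a singleton. -/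
/-- If a finite structure `A` over the signature `{≤, ≠}` contains elements
`a 0, …, a (k-1)` forming a `≤`-cycle with a `≠`-constraint between two of its members,
then there is no homomorphism `h` from `A` to `℘((ℚ; ≤, ≠))` with `h (a 0)` a singleton. -/
theorem no_singleton_hom_of_le_cycle_with_neq (A : RelStruct sig2) (hfin : Finite A.carrier)
    (k : ℕ) (hk : 0 < k) (a : Fin k → A.carrier)
    (hchain : ∀ i : Fin k, (hi : i.val + 1 < k) → ![a i, a ⟨i.val + 1, hi⟩] ∈ A.rel 0)
    (hcyc : ![a ⟨k - 1, Nat.sub_lt hk Nat.one_pos⟩, a ⟨0, hk⟩] ∈ A.rel 0)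
    (hne : ∃ p q : Fin k, ![a p, a q] ∈ A.rel 1) :
    ¬ ∃ h : A.carrier → (PowStruct ratStruct).carrier,
      IsHom A (PowStruct ratStruct) h ∧ ∃ b, (h (a ⟨0, hk⟩)).val = {b} := by
  rintro ⟨h, hhom, b, hb⟩
  obtain ⟨p, q, hpq⟩ := hne
  have key : ∀ (x y : A.carrier), ![x, y] ∈ A.rel 0 →
      (∀ r ∈ (h x).val, ∃ s ∈ (h y).val, r ≤ s) ∧
      (∀ s ∈ (h y).val, ∃ r ∈ (h x).val, r ≤ s) := by
    intro x y hxy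
    obtain ⟨S, hSne, hSsub, hproj⟩ := hhom 0 ![x, y] hxy
    have h0 := hproj 0
    have h1 := hproj 1
    simp only [Matrix.cons_val_zero, Matrix.cons_val_one, Matrix.head_cons] at h0 h1
    constructor
    · intro r hr
      rw [h0] at hr
      obtain ⟨s, hs, rfl⟩ := hr
      exact ⟨s 1, by rw [h1]; exact ⟨s, hs, rfl⟩, hSsub hs⟩
    · intro s hs
      rw [h1] at hs
      obtain ⟨t, ht, rfl⟩ := hs
      exact ⟨t 0, by rw [h0]; exact ⟨t, ht, rfl⟩, hSsub ht⟩
  have upper : ∀ m, ∀ i : Fin k, k - 1 - i.val = m → ∀ x ∈ (h (a i)).val, x ≤ b := by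
    intro m
    induction m with
    | zero =>
      intro i hi x hx
      have hiv : i = ⟨k - 1, Nat.sub_lt hk Nat.one_pos⟩ := by
        have := i.isLt; simp only [Fin.ext_iff, Fin.val_mk]; omega
      rw [hiv] at hx
      obtain ⟨s, hs, hxs⟩ := (key _ _ hcyc).1 x hx
      rw [hb] at hs
      exact hs ▸ hxs
    | succ m ih =>
      intro i hi x hx
      have h1 : i.val + 1 < k := by have := i.isLt; omega
      obtain ⟨s, hs, hxs⟩ := (key _ _ (hchain i h1)).1 x hx
      exact le_trans hxs (ih ⟨i.val + 1, h1⟩ (by simp; omega) s hs)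
  have lower : ∀ m, ∀ i : Fin k, i.val = m → ∀ x ∈ (h (a i)).val, b ≤ x := by
    intro m
    induction m with
    | zero =>
      intro i hi x hx
      have hiv : i = ⟨0, hk⟩ := Fin.ext hi
      rw [hiv, hb] at hx
      exact le_of_eq hx.symm
    | succ m ih =>
      intro i hi x hx
      have hm : m < k := by have := i.isLt; omega
      have h1 : m + 1 < k := by have := i.isLt; omega
      have hiv : i = ⟨m + 1, h1⟩ := Fin.ext hi
      rw [hiv] at hx
      obtain ⟨r, hr, hrx⟩ := (key _ _ (hchain ⟨m, hm⟩ h1)).2 x hx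
      exact le_trans (ih ⟨m, hm⟩ rfl r hr) hrx
  have heq : ∀ i : Fin k, (h (a i)).val = {b} := by
    intro i
    have hm : ∀ x ∈ (h (a i)).val, x = b := fun x hx =>
      le_antisymm (upper _ i rfl x hx) (lower _ i rfl x hx)
    obtain ⟨x, hx⟩ := (h (a i)).2
    have hxb := hm x hx
    exact Set.eq_singleton_iff_unique_mem.mpr ⟨hxb ▸ hx, hm⟩
  obtain ⟨S, ⟨s, hs⟩, hSsub, hproj⟩ := hhom 1 ![a p, a q] hpq
  have h0 := hproj 0
  have h1 := hproj 1
  simp only [Matrix.cons_val_zero, Matrix.cons_val_one, Matrix.head_cons] at h0 h1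
  have hs0 : s 0 ∈ (h (a p)).val := by rw [h0]; exact ⟨s, hs, rfl⟩
  have hs1 : s 1 ∈ (h (a q)).val := by rw [h1]; exact ⟨s, hs, rfl⟩
  rw [heq p] at hs0
  rw [heq q] at hs1
  exact hSsub hs (hs0.trans hs1.symm)
end
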